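/- arXiv:1702.06587 — 5 statements merged into one kernel-verified Lean document; each statement's English description precedes it below -/
import Mathlib

section
/- If L₁ and L₂ are linear orders that satisfy the same first-order sentences, then for any linear orders P and Q, the sums P + L₁ + Q and P + L₂ + Q satisfy the same first-order sentences (in the language of linear orders). -/
open FirstOrder Language

attribute [local instance] FirstOrder.Language.orderStructure

set_option linter.unusedSectionVars false

namespace EFSum

instance orderedStructureOfLE {M : Type} [LE M] : Language.order.OrderedStructure M :=
  ⟨fun _ => Iff.rfl⟩


/-- Cons an element onto an `Option`-indexed tuple. -/
def ocons {γ M : Type} (a : M) (f : γ → M) : Option γ → M :=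
  fun o => o.elim a f

/-- Ehrenfeucht–Fraïssé style relation between tuples in two linear orders. -/
def EF (A B : Type) [LinearOrder A] [LinearOrder B] :
    ℕ → {γ : Type} → (γ → A) → (γ → B) → Prop
  | 0, _, f, g => ∀ i j, f i ≤ f j ↔ g i ≤ g j
  | k+1, _, f, g =>
      (∀ a : A, ∃ b : B, EF A B k (ocons a f) (ocons b g)) ∧
      (∀ b : B, ∃ a : A, EF A B k (ocons a f) (ocons b g))

variable {A B : Type} [LinearOrder A] [LinearOrder B]

theorem EF_zero {γ : Type} {f : γ → A} {g : γ → B} :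
    EF A B 0 f g ↔ ∀ i j, f i ≤ f j ↔ g i ≤ g j := Iff.rfl

theorem EF_succ {γ : Type} {k : ℕ} {f : γ → A} {g : γ → B} :
    EF A B (k+1) f g ↔
      (∀ a : A, ∃ b : B, EF A B k (ocons a f) (ocons b g)) ∧
      (∀ b : B, ∃ a : A, EF A B k (ocons a f) (ocons b g)) := Iff.rfl

theorem EF.precomp {k : ℕ} : ∀ {γ : Type} {f : γ → A} {g : γ → B},
    EF A B k f g → ∀ {δ : Type} (h : δ → γ), EF A B k (f ∘ h) (g ∘ h) := by
  induction k with
  | zero => intro γ f g H δ h i j; exact H (h i) (h j)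
  | succ k ih =>
    intro γ f g H δ h
    refine ⟨fun a => ?_, fun b => ?_⟩
    · obtain ⟨b, hb⟩ := H.1 a
      refine ⟨b, ?_⟩
      have := ih hb (Option.map h)
      have e1 : ocons a f ∘ Option.map h = ocons a (f ∘ h) := by
        funext o; cases o <;> rfl
      have e2 : ocons b g ∘ Option.map h = ocons b (g ∘ h) := by
        funext o; cases o <;> rfl
      rwa [e1, e2] at this
    · obtain ⟨a, ha⟩ := H.2 b
      refine ⟨a, ?_⟩
      have := ih ha (Option.map h)
      have e1 : ocons a f ∘ Option.map h = ocons a (f ∘ h) := by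
        funext o; cases o <;> rfl
      have e2 : ocons b g ∘ Option.map h = ocons b (g ∘ h) := by
        funext o; cases o <;> rfl
      rwa [e1, e2] at this

theorem EF.of_isEmpty [IsEmpty A] [IsEmpty B] {k : ℕ} {γ : Type} (f : γ → A) (g : γ → B) :
    EF A B k f g := by
  induction k with
  | zero => intro i j; exact isEmptyElim (f i)
  | succ k ih => exact ⟨fun a => isEmptyElim a, fun b => isEmptyElim b⟩

theorem EF.mono_succ {k : ℕ} {γ : Type} {f : γ → A} {g : γ → B}
    (H : EF A B (k+1) f g) : EF A B k f g := by
  by_cases hA : Nonempty A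
  · obtain ⟨a⟩ := hA
    obtain ⟨b, hb⟩ := H.1 a
    have := hb.precomp (some : γ → Option γ)
    exact this
  · by_cases hB : Nonempty B
    · obtain ⟨b⟩ := hB
      obtain ⟨a, _⟩ := H.2 b
      exact absurd ⟨a⟩ hA
    · haveI : IsEmpty A := not_nonempty_iff.mp hA
      haveI : IsEmpty B := not_nonempty_iff.mp hB
      exact EF.of_isEmpty f g

theorem EF.mono {j k : ℕ} (hjk : j ≤ k) {γ : Type} {f : γ → A} {g : γ → B}
    (H : EF A B k f g) : EF A B j f g := by
  induction k with
  | zero => exact Nat.le_zero.mp hjk ▸ H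
  | succ k ih =>
    rcases Nat.lt_or_ge j (k+1) with h | h
    · exact ih (Nat.lt_succ_iff.mp h) H.mono_succ
    · exact Nat.le_antisymm hjk h ▸ H

theorem snoc_eq_ocons_comp {n : ℕ} {M : Type} (xs : Fin n → M) (a : M) :
    Fin.snoc xs a = ocons a xs ∘ (Fin.lastCases none some) := by
  funext i
  refine Fin.lastCases ?_ ?_ i
  · simp [ocons, Fin.snoc_last]
  · intro j; simp [ocons, Fin.snoc_castSucc]

theorem EF.snoc_iff_ocons {k n : ℕ} {xs : Fin n → A} {ys : Fin n → B} {a : A} {b : B} :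
    EF A B k (Fin.snoc xs a) (Fin.snoc ys b) ↔ EF A B k (ocons a xs) (ocons b ys) := by
  constructor
  · intro H
    have := H.precomp (fun o : Option (Fin n) => o.elim (Fin.last n) Fin.castSucc)
    have e1 : Fin.snoc xs a ∘ (fun o : Option (Fin n) => o.elim (Fin.last n) Fin.castSucc)
        = ocons a xs := by funext o; cases o <;> simp [ocons]
    have e2 : Fin.snoc ys b ∘ (fun o : Option (Fin n) => o.elim (Fin.last n) Fin.castSucc)
        = ocons b ys := by funext o; cases o <;> simp [ocons]
    rwa [e1, e2] at this
  · intro H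
    have := H.precomp (Fin.lastCases none some : Fin (n+1) → Option (Fin n))
    rwa [← snoc_eq_ocons_comp, ← snoc_eq_ocons_comp] at this


def depth {L : Language} : ∀ {α : Type} {n : ℕ}, L.BoundedFormula α n → ℕ
  | _, _, .falsum => 0
  | _, _, .equal _ _ => 0
  | _, _, .rel _ _ => 0
  | _, _, .imp φ ψ => max (depth φ) (depth ψ)
  | _, _, .all φ => depth φ + 1

theorem term_eq_var {β : Type} (t : Language.order.Term β) : ∃ i, t = Term.var i := by
  cases t with
  | var i => exact ⟨i, rfl⟩
  | func f ts => exact isEmptyElim f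

theorem realize_iff_of_EF :
    ∀ {n : ℕ} (φ : Language.order.BoundedFormula Empty n) {k : ℕ} (_ : depth φ ≤ k)
      {v : Empty → A} {w : Empty → B} {xs : Fin n → A} {ys : Fin n → B},
      EF A B k xs ys → (φ.Realize v xs ↔ φ.Realize w ys) := by
  intro n φ
  induction φ with
  | falsum => intro k hk v w xs ys hEF; simp [BoundedFormula.Realize]
  | equal t₁ t₂ =>
    intro k hk v w xs ys hEF
    obtain ⟨i, rfl⟩ := term_eq_var t₁
    obtain ⟨j, rfl⟩ := term_eq_var t₂
    cases i with
    | inl e => exact isEmptyElim e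
    | inr i =>
      cases j with
      | inl e => exact isEmptyElim e
      | inr j =>
        have h := EF.mono (Nat.zero_le k) hEF
        have h1 := h i j
        have h2 := h j i
        show xs i = xs j ↔ ys i = ys j
        rw [le_antisymm_iff, le_antisymm_iff, h1, h2]
  | rel R ts =>
    intro k hk v w xs ys hEF
    cases R
    obtain ⟨i, hi⟩ := term_eq_var (ts 0)
    obtain ⟨j, hj⟩ := term_eq_var (ts 1)
    cases i with
    | inl e => exact isEmptyElim e
    | inr i =>
      cases j with
      | inl e => exact isEmptyElim e
      | inr j =>
        have h := EF.mono (Nat.zero_le k) hEF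
        have gA : (BoundedFormula.rel orderRel.le ts).Realize v xs ↔ xs i ≤ xs j := by
          show Structure.RelMap (leSymb : Language.order.Relations 2) (fun i' => Term.realize (Sum.elim v xs) (ts i')) ↔ xs i ≤ xs j
          show Term.realize (Sum.elim v xs) (ts 0) ≤ Term.realize (Sum.elim v xs) (ts 1) ↔ xs i ≤ xs j
          simp [hi, hj]
        have gB : (BoundedFormula.rel orderRel.le ts).Realize w ys ↔ ys i ≤ ys j := by
          show Structure.RelMap (leSymb : Language.order.Relations 2) (fun i' => Term.realize (Sum.elim w ys) (ts i')) ↔ ys i ≤ ys j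
          show Term.realize (Sum.elim w ys) (ts 0) ≤ Term.realize (Sum.elim w ys) (ts 1) ↔ ys i ≤ ys j
          simp [hi, hj]
        rw [gA, gB]
        exact h i j
  | imp φ ψ ihφ ihψ =>
    intro k hk v w xs ys hEF
    simp only [depth, max_le_iff] at hk
    simp only [BoundedFormula.realize_imp]
    rw [ihφ hk.1 hEF, ihψ hk.2 hEF]
  | all φ ih =>
    intro k hk v w xs ys hEF
    simp only [depth] at hk
    obtain ⟨k, rfl⟩ : ∃ k', k = k' + 1 :=
      ⟨k - 1, by omega⟩
    obtain ⟨h1, h2⟩ := hEF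
    simp only [BoundedFormula.realize_all]
    constructor
    · intro H b
      obtain ⟨a, ha⟩ := h2 b
      exact (ih (by omega) (EF.snoc_iff_ocons.mpr ha)).mp (H a)
    · intro H a
      obtain ⟨b, hb⟩ := h1 a
      exact (ih (by omega) (EF.snoc_iff_ocons.mpr hb)).mpr (H b)


/-- Abstract rank-`k` types of `n`-tuples in a linear order. -/
@[reducible] def Typ : ℕ → ℕ → Type
  | 0, n => Fin n → Fin n → Bool
  | k+1, n => Finset (Typ k (n+1))

instance typDecEq : ∀ (k n : ℕ), DecidableEq (Typ k n)
  | 0, n => inferInstanceAs (DecidableEq (Fin n → Fin n → Bool))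
  | k+1, n =>
    letI := typDecEq k (n+1)
    inferInstanceAs (DecidableEq (Finset (Typ k (n+1))))

instance typFintype : ∀ (k n : ℕ), Fintype (Typ k n)
  | 0, n => inferInstanceAs (Fintype (Fin n → Fin n → Bool))
  | k+1, n =>
    letI := typFintype k (n+1)
    letI := typDecEq k (n+1)
    inferInstanceAs (Fintype (Finset (Typ k (n+1))))

/-- The rank-`k` type of a tuple in a linear order. -/
noncomputable def typOf (M : Type) [LinearOrder M] : ∀ (k : ℕ) {n : ℕ}, (Fin n → M) → Typ k n
  | 0, _, xs => fun i j => decide (xs i ≤ xs j)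
  | k+1, n, xs =>
    letI : Fintype (Typ k (n+1)) := typFintype k _
    (Set.toFinite (Set.range fun a : M => typOf M k (Fin.snoc xs a))).toFinset

theorem typOf_zero {M : Type} [LinearOrder M] {n : ℕ} (xs : Fin n → M) :
    typOf M 0 xs = fun i j => decide (xs i ≤ xs j) := rfl

theorem mem_typOf_succ {M : Type} [LinearOrder M] {k n : ℕ} {xs : Fin n → M}
    {t : Typ k (n+1)} :
    (t ∈ (typOf M (k+1) xs : Finset (Typ k (n+1)))) ↔ ∃ a, typOf M k (Fin.snoc xs a) = t := by
  rw [show (typOf M (k+1) xs : Finset (Typ k (n+1)))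
      = (Set.toFinite (Set.range fun a : M => typOf M k (Fin.snoc xs a))).toFinset from rfl]
  rw [Set.Finite.mem_toFinset, Set.mem_range]

theorem EF_of_typOf : ∀ (k : ℕ) {n : ℕ} {xs : Fin n → A} {ys : Fin n → B},
    typOf A k xs = typOf B k ys → EF A B k xs ys := by
  intro k
  induction k with
  | zero =>
    intro n xs ys h i j
    rw [typOf_zero, typOf_zero] at h
    have := congrFun (congrFun h i) j
    exact decide_eq_decide.mp this
  | succ k ih =>
    intro n xs ys h
    constructor
    · intro a
      have hmem : typOf A k (Fin.snoc xs a) ∈ (typOf B (k+1) ys : Finset (Typ k (n+1))) := by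
        rw [← h, mem_typOf_succ]; exact ⟨a, rfl⟩
      rw [mem_typOf_succ] at hmem
      obtain ⟨b, hb⟩ := hmem
      exact ⟨b, EF.snoc_iff_ocons.mp (ih hb.symm)⟩
    · intro b
      have hmem : typOf B k (Fin.snoc ys b) ∈ (typOf A (k+1) xs : Finset (Typ k (n+1))) := by
        rw [h, mem_typOf_succ]; exact ⟨b, rfl⟩
      rw [mem_typOf_succ] at hmem
      obtain ⟨a, ha⟩ := hmem
      exact ⟨a, EF.snoc_iff_ocons.mp (ih ha)⟩

/-- The characteristic formula of an abstract type. -/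
noncomputable def chi : ∀ (k : ℕ) {n : ℕ}, Typ k n → Language.order.BoundedFormula Empty n
  | 0, n, t =>
    BoundedFormula.iInf
      (fun p : Fin n × Fin n =>
        if t p.1 p.2 then Term.le (Term.var (Sum.inr p.1)) (Term.var (Sum.inr p.2))
        else ∼(Term.le (Term.var (Sum.inr p.1)) (Term.var (Sum.inr p.2))))
  | k+1, n, t =>
    letI := typDecEq k (n+1)
    (BoundedFormula.iInf (fun s : (t : Finset (Typ k (n+1))) => (chi k s).ex)) ⊓
      (BoundedFormula.iSup (fun s : (t : Finset (Typ k (n+1))) => chi k s)).all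

theorem realize_chi (M : Type) [LinearOrder M] :
    ∀ (k : ℕ) {n : ℕ} (t : Typ k n) (v : Empty → M) (xs : Fin n → M),
      (chi k t).Realize v xs ↔ typOf M k xs = t := by
  intro k
  induction k with
  | zero =>
    intro n t v xs
    rw [show chi 0 t = BoundedFormula.iInf
      (fun p : Fin n × Fin n =>
        if t p.1 p.2 then Term.le (Term.var (Sum.inr p.1)) (Term.var (Sum.inr p.2))
        else ∼(Term.le (Term.var (Sum.inr p.1)) (Term.var (Sum.inr p.2)))) from rfl]
    rw [BoundedFormula.realize_iInf]
    constructor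
    · intro H
      funext i j
      have := H (i, j)
      by_cases hb : t i j
      · rw [if_pos hb] at this
        rw [Term.realize_le] at this
        simp only [Term.realize_var, Sum.elim_inr] at this
        simp [typOf_zero, this, hb]
      · rw [if_neg hb] at this
        rw [BoundedFormula.realize_not, Term.realize_le] at this
        simp only [Term.realize_var, Sum.elim_inr] at this
        simp only [Bool.not_eq_true] at hb
        simp [typOf_zero, this, hb]
    · intro H p
      subst H
      by_cases hb : xs p.1 ≤ xs p.2
      · rw [if_pos (by simp [typOf_zero, hb])]
        rw [Term.realize_le]
        simpa using hb
      · rw [if_neg (by simp [typOf_zero, hb])]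
        rw [BoundedFormula.realize_not, Term.realize_le]
        simpa using hb
  | succ k ih =>
    intro n t v xs
    letI := typDecEq k (n+1)
    rw [show chi (k+1) t =
      (BoundedFormula.iInf (fun s : (t : Finset (Typ k (n+1))) => (chi k s).ex)) ⊓
      (BoundedFormula.iSup (fun s : (t : Finset (Typ k (n+1))) => chi k s)).all from rfl]
    rw [BoundedFormula.realize_inf, BoundedFormula.realize_iInf, BoundedFormula.realize_all]
    constructor
    · rintro ⟨H1, H2⟩
      apply Finset.ext
      intro s
      rw [mem_typOf_succ]
      constructor
      · rintro ⟨a, rfl⟩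
        have := H2 a
        rw [BoundedFormula.realize_iSup] at this
        obtain ⟨⟨s', hs'⟩, hr⟩ := this
        rw [ih s' v (Fin.snoc xs a)] at hr
        rwa [hr]
      · intro hs
        obtain ⟨a, ha⟩ := by
          have := H1 ⟨s, hs⟩
          rw [BoundedFormula.realize_ex] at this
          exact this
        rw [ih s v (Fin.snoc xs a)] at ha
        exact ⟨a, ha⟩
    · intro H
      subst H
      constructor
      · intro ⟨s, hs⟩
        rw [mem_typOf_succ] at hs
        obtain ⟨a, ha⟩ := hs
        rw [BoundedFormula.realize_ex]
        exact ⟨a, (ih s v (Fin.snoc xs a)).mpr ha⟩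
      · intro a
        rw [BoundedFormula.realize_iSup]
        refine ⟨⟨typOf M k (Fin.snoc xs a), ?_⟩, (ih _ v _).mpr rfl⟩
        rw [mem_typOf_succ]
        exact ⟨a, rfl⟩


section Comp

variable {P Q L₁ L₂ : Type} [LinearOrder P] [LinearOrder Q]
  [LinearOrder L₁] [LinearOrder L₂]

/-- Embed a pattern together with a middle tuple into the lexicographic sum. -/
def emb {γ δ L : Type} (c : γ → P ⊕ (δ ⊕ Q)) (f : δ → L) : γ → P ⊕ₗ L ⊕ₗ Q :=
  fun i =>
    match c i with
    | Sum.inl p => toLex (Sum.inl p)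
    | Sum.inr (Sum.inl d) => toLex (Sum.inr (toLex (Sum.inl (f d))))
    | Sum.inr (Sum.inr q) => toLex (Sum.inr (toLex (Sum.inr q)))

/-- Remap a pattern after adjoining a fresh middle slot. -/
def remap {γ δ : Type} (c : γ → P ⊕ (δ ⊕ Q)) : γ → P ⊕ (Option δ ⊕ Q) :=
  fun i => Sum.map id (Sum.map some id) (c i)

theorem emb_ocons_inl {γ δ L : Type} [LinearOrder L] (c : γ → P ⊕ (δ ⊕ Q)) (f : δ → L) (p : P) :
    ocons (toLex (Sum.inl p) : P ⊕ₗ L ⊕ₗ Q) (emb c f) = emb (ocons (Sum.inl p) c) f := by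
  funext o; cases o <;> rfl

theorem emb_ocons_inr {γ δ L : Type} [LinearOrder L] (c : γ → P ⊕ (δ ⊕ Q)) (f : δ → L) (q : Q) :
    ocons (toLex (Sum.inr (toLex (Sum.inr q))) : P ⊕ₗ L ⊕ₗ Q) (emb c f)
      = emb (ocons (Sum.inr (Sum.inr q)) c) f := by
  funext o; cases o <;> rfl

theorem emb_ocons_mid {γ δ L : Type} [LinearOrder L] (c : γ → P ⊕ (δ ⊕ Q)) (f : δ → L) (l : L) :
    ocons (toLex (Sum.inr (toLex (Sum.inl l))) : P ⊕ₗ L ⊕ₗ Q) (emb c f)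
      = emb (ocons (Sum.inr (Sum.inl (none : Option δ))) (remap c)) (ocons l f) := by
  funext o
  cases o with
  | none => rfl
  | some i =>
    show emb c f i = _
    simp only [emb, ocons, remap, Option.elim]
    rcases c i with p | d | q <;> rfl

theorem EF_comp : ∀ (k : ℕ) {γ δ : Type} (c : γ → P ⊕ (δ ⊕ Q)) (f : δ → L₁) (g : δ → L₂),
    EF L₁ L₂ k f g → EF (P ⊕ₗ L₁ ⊕ₗ Q) (P ⊕ₗ L₂ ⊕ₗ Q) k (emb c f) (emb c g) := by
  intro k
  induction k with
  | zero =>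
    intro γ δ c f g h i j
    rcases hci : c i with p | d | q <;> rcases hcj : c j with p' | d' | q' <;>
      simp only [emb, hci, hcj] <;>
      simp [Sum.Lex.inl_le_inl_iff, Sum.Lex.inr_le_inr_iff, Sum.Lex.inl_le_inr,
        Sum.Lex.not_inr_le_inl]
    · exact h d d'
  | succ k ih =>
    intro γ δ c f g h
    constructor
    · intro a
      obtain ⟨x, hx⟩ : ∃ x : P ⊕ (L₁ ⊕ₗ Q), a = toLex x := ⟨ofLex a, rfl⟩
      rw [hx]
      rcases x with p | y
      · exact ⟨toLex (Sum.inl p), by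
          rw [emb_ocons_inl, emb_ocons_inl]
          exact ih _ f g h.mono_succ⟩
      · obtain ⟨z, hz⟩ : ∃ z : L₁ ⊕ Q, y = toLex z := ⟨ofLex y, rfl⟩
        rw [hz]
        rcases z with l | q
        · obtain ⟨l₂, hl⟩ := h.1 l
          exact ⟨toLex (Sum.inr (toLex (Sum.inl l₂))), by
            rw [emb_ocons_mid, emb_ocons_mid]
            exact ih _ _ _ hl⟩
        · exact ⟨toLex (Sum.inr (toLex (Sum.inr q))), by
            rw [emb_ocons_inr, emb_ocons_inr]
            exact ih _ f g h.mono_succ⟩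
    · intro b
      obtain ⟨x, hx⟩ : ∃ x : P ⊕ (L₂ ⊕ₗ Q), b = toLex x := ⟨ofLex b, rfl⟩
      rw [hx]
      rcases x with p | y
      · exact ⟨toLex (Sum.inl p), by
          rw [emb_ocons_inl, emb_ocons_inl]
          exact ih _ f g h.mono_succ⟩
      · obtain ⟨z, hz⟩ : ∃ z : L₂ ⊕ Q, y = toLex z := ⟨ofLex y, rfl⟩
        rw [hz]
        rcases z with l | q
        · obtain ⟨l₁, hl⟩ := h.2 l
          exact ⟨toLex (Sum.inr (toLex (Sum.inl l₁))), by
            rw [emb_ocons_mid, emb_ocons_mid]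
            exact ih _ _ _ hl⟩
        · exact ⟨toLex (Sum.inr (toLex (Sum.inr q))), by
            rw [emb_ocons_inr, emb_ocons_inr]
            exact ih _ f g h.mono_succ⟩

end Comp

end EFSum

open EFSum

/-- If the linear orders `L₁` and `L₂` satisfy the same first-order sentences (in the language
of orders), then for any linear orders `P` and `Q`, the sums `P + L₁ + Q` and `P + L₂ + Q`
satisfy the same first-order sentences. -/
theorem sum_elementarilyEquivalent_of_middle
    (P L₁ L₂ Q : Type) [LinearOrder P] [LinearOrder L₁] [LinearOrder L₂] [LinearOrder Q]
    (h : Language.order.ElementarilyEquivalent L₁ L₂) :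
    Language.order.ElementarilyEquivalent (P ⊕ₗ L₁ ⊕ₗ Q) (P ⊕ₗ L₂ ⊕ₗ Q) := by
  rw [Language.elementarilyEquivalent_iff] at h ⊢
  intro φ
  have hL : EF L₁ L₂ (depth φ) (γ := Fin 0) default default := by
    apply EF_of_typOf
    have h1 : L₁ ⊨ (chi (depth φ) (typOf L₁ (depth φ) (default : Fin 0 → L₁))
        : Language.order.Sentence) :=
      (realize_chi L₁ (depth φ) _ default default).mpr rfl
    have h2 := (h _).mp h1
    exact ((realize_chi L₂ (depth φ) _ default default).mp h2).symm
  have hEF : EF (P ⊕ₗ L₁ ⊕ₗ Q) (P ⊕ₗ L₂ ⊕ₗ Q) (depth φ) (γ := Fin 0) default default := by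
    have hc := EF_comp (P := P) (Q := Q) (depth φ) (γ := Fin 0) (δ := Fin 0)
      (fun i : Fin 0 => i.elim0) default default hL
    have e1 : emb (L := L₁) (δ := Fin 0) (fun i : Fin 0 => i.elim0) default
        = (default : Fin 0 → P ⊕ₗ L₁ ⊕ₗ Q) := funext fun i => i.elim0
    have e2 : emb (L := L₂) (δ := Fin 0) (fun i : Fin 0 => i.elim0) default
        = (default : Fin 0 → P ⊕ₗ L₂ ⊕ₗ Q) := funext fun i => i.elim0
    rwa [e1, e2] at hc
  exact realize_iff_of_EF φ (le_refl (depth φ)) hEF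
end

section
/- Let A₁,…,A_k be structures in pairwise disjoint relational languages and let B be their disjoint union with unary predicates R₁,…,R_k picking out the respective domains. Then every first-order formula in the language of B is equivalent in B to a Boolean combination of formulas each of which only involves quantifiers relativized to a single sort R_i and only relations of the corresponding A_i. -/
open FirstOrder Language

namespace Stmt5

variable (k : ℕ) (Ls : Fin k → FirstOrder.Language) [∀ i, (Ls i).IsRelational]

/-- The language of the disjoint union of structures `A₁, …, A_k` in pairwise disjoint
relational languages `Ls 1, …, Ls k`, with additional unary predicates `R_i` picking out the
domains. -/
def bigLang : FirstOrder.Language :=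
  ⟨fun _ => Empty, fun n => (Σ i : Fin k, (Ls i).Relations n) ⊕ (PLift (n = 1) × Fin k)⟩

variable (A : Fin k → Type) [∀ i, (Ls i).Structure (A i)]

/-- The disjoint union structure: relations of `A_i` are interpreted on the `i`-th component
only (false otherwise), and `R_i` is the unary predicate for the domain of `A_i`. -/
def bigStruct : (bigLang k Ls).Structure (Σ i, A i) where
  funMap := fun f _ => f.elim
  RelMap := fun {n} r v =>
    match r with
    | Sum.inl ⟨i, r⟩ =>
        ∃ w : Fin n → A i, (∀ j, v j = ⟨i, w j⟩) ∧ Structure.RelMap r w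
    | Sum.inr ⟨_, i⟩ => ∀ j : Fin n, (v j).1 = i

variable {k Ls}

/-- `IsRel i φ`: `φ` is an `A_i`-formula, i.e. all its quantifiers are relativized to the
sort `R_i` and its non-logical symbols come from the language of `A_i` together with `R_i`. -/
inductive IsRel {α : Type} (i : Fin k) : ∀ {n : ℕ}, (bigLang k Ls).BoundedFormula α n → Prop
  | falsum {n} : IsRel i (.falsum : (bigLang k Ls).BoundedFormula α n)
  | equal {n} (t₁ t₂ : (bigLang k Ls).Term (α ⊕ Fin n)) : IsRel i (.equal t₁ t₂)
  | rel {n m} (r : (Ls i).Relations m)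
      (ts : Fin m → (bigLang k Ls).Term (α ⊕ Fin n)) :
      IsRel i (.rel (Sum.inl ⟨i, r⟩) ts)
  | relR {n} (ts : Fin 1 → (bigLang k Ls).Term (α ⊕ Fin n)) :
      IsRel i (.rel (Sum.inr ⟨PLift.up rfl, i⟩) ts)
  | imp {n} {φ ψ : (bigLang k Ls).BoundedFormula α n} :
      IsRel i φ → IsRel i ψ → IsRel i (φ.imp ψ)
  | all {n} {φ : (bigLang k Ls).BoundedFormula α (n + 1)} :
      IsRel i φ →
      IsRel i (((BoundedFormula.rel (Sum.inr ⟨PLift.up rfl, i⟩)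
        (fun _ => Term.var (Sum.inr (Fin.last n)))).imp φ).all)

/-- `IsBC φ`: `φ` is a Boolean combination of `A_i`-formulas (for varying `i`). -/
inductive IsBC {α : Type} : ∀ {n : ℕ}, (bigLang k Ls).BoundedFormula α n → Prop
  | of {n} (i : Fin k) {φ : (bigLang k Ls).BoundedFormula α n} : IsRel i φ → IsBC φ
  | falsum {n} : IsBC (.falsum : (bigLang k Ls).BoundedFormula α n)
  | imp {n} {φ ψ : (bigLang k Ls).BoundedFormula α n} : IsBC φ → IsBC ψ → IsBC (φ.imp ψ)


section Aux

attribute [local instance] bigStruct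

set_option linter.unusedSectionVars false

variable {A : Fin k → Type} [∀ i, (Ls i).Structure (A i)] {α : Type}

/-! Basic closure properties of `IsRel` and `IsBC`. -/

theorem IsRel.not {i : Fin k} {n} {φ : (bigLang k Ls).BoundedFormula α n}
    (h : IsRel i φ) : IsRel i φ.not :=
  h.imp .falsum

theorem IsRel.sup {i : Fin k} {n} {φ ψ : (bigLang k Ls).BoundedFormula α n}
    (h₁ : IsRel i φ) (h₂ : IsRel i ψ) : IsRel i (φ ⊔ ψ) :=
  h₁.not.imp h₂

theorem IsRel.inf {i : Fin k} {n} {φ ψ : (bigLang k Ls).BoundedFormula α n}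
    (h₁ : IsRel i φ) (h₂ : IsRel i ψ) : IsRel i (φ ⊓ ψ) :=
  ((h₁.imp h₂.not).not)

theorem IsRel.bot {i : Fin k} {n} : IsRel i (⊥ : (bigLang k Ls).BoundedFormula α n) :=
  .falsum

theorem IsBC.not {n} {φ : (bigLang k Ls).BoundedFormula α n}
    (h : IsBC φ) : IsBC φ.not :=
  h.imp .falsum

theorem IsBC.sup {n} {φ ψ : (bigLang k Ls).BoundedFormula α n}
    (h₁ : IsBC φ) (h₂ : IsBC ψ) : IsBC (φ ⊔ ψ) :=
  h₁.not.imp h₂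

theorem IsBC.inf {n} {φ ψ : (bigLang k Ls).BoundedFormula α n}
    (h₁ : IsBC φ) (h₂ : IsBC ψ) : IsBC (φ ⊓ ψ) :=
  ((h₁.imp h₂.not).not)

theorem IsBC.bot {n} : IsBC (⊥ : (bigLang k Ls).BoundedFormula α n) :=
  .falsum

theorem isBC_listConj {n} {l : List ((bigLang k Ls).BoundedFormula α n)}
    (h : ∀ φ ∈ l, IsBC φ) : IsBC (l.foldr (· ⊓ ·) ⊤) := by
  induction l with
  | nil => exact IsBC.bot.not
  | cons φ l ih =>
      exact (h φ (by simp)).inf (ih fun ψ hψ => h ψ (by simp [hψ]))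

/-! Unfolding the interpretation of relation symbols in the disjoint union. -/

theorem relMap_inl {n : ℕ} (i : Fin k) (r : (Ls i).Relations n) (vv : Fin n → Σ i, A i) :
    Structure.RelMap (L := bigLang k Ls) (Sum.inl ⟨i, r⟩) vv ↔
      ∃ w : Fin n → A i, (∀ j, vv j = ⟨i, w j⟩) ∧ Structure.RelMap r w :=
  Iff.rfl

theorem relMap_inr {n : ℕ} (h : PLift (n = 1)) (i : Fin k) (vv : Fin n → Σ i, A i) :
    Structure.RelMap (L := bigLang k Ls) (Sum.inr (⟨h, i⟩ : PLift (n = 1) × Fin k)) vv ↔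
      ∀ j : Fin n, (vv j).1 = i :=
  Iff.rfl

theorem realize_equal {n : ℕ} (t₁ t₂ : (bigLang k Ls).Term (α ⊕ Fin n))
    (v : α → Σ i, A i) (xs : Fin n → Σ i, A i) :
    (BoundedFormula.equal t₁ t₂).Realize v xs ↔
      t₁.realize (Sum.elim v xs) = t₂.realize (Sum.elim v xs) :=
  Iff.rfl

theorem realize_rel' {n m : ℕ} (R : (bigLang k Ls).Relations m)
    (ts : Fin m → (bigLang k Ls).Term (α ⊕ Fin n))
    (v : α → Σ i, A i) (xs : Fin n → Σ i, A i) :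
    (BoundedFormula.rel R ts).Realize v xs ↔
      Structure.RelMap R fun q => (ts q).realize (Sum.elim v xs) :=
  Iff.rfl

/-! Terms in a relational language are variables. -/

def tvar {β : Type} (t : (bigLang k Ls).Term β) : β :=
  match t with
  | .var u => u
  | .func f _ => Empty.elim f

theorem tvar_eq {β : Type} (t : (bigLang k Ls).Term β) : t = .var (tvar t) :=
  match t with
  | .var _ => rfl
  | .func f _ => Empty.elim f

/-! Clause-list (CNF) combinators.  A list `l` of pairs `(Aᵢ, Eᵢ)` represents the
conjunction over `i` of the disjunctions `Aᵢ ∨ Eᵢ` (the two components are formulas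
with possibly different numbers of bound variables, evaluated by two fixed
valuations). -/

def negCNF {a b : ℕ} :
    List ((bigLang k Ls).BoundedFormula α a × (bigLang k Ls).BoundedFormula α b) →
    List ((bigLang k Ls).BoundedFormula α a × (bigLang k Ls).BoundedFormula α b)
  | [] => [(⊥, ⊥)]
  | p :: l => ((negCNF l).map fun q => (p.1.not ⊔ q.1, q.2)) ++
      ((negCNF l).map fun q => (q.1, p.2.not ⊔ q.2))

def orCNF {a b : ℕ} :
    List ((bigLang k Ls).BoundedFormula α a × (bigLang k Ls).BoundedFormula α b) →
    List ((bigLang k Ls).BoundedFormula α a × (bigLang k Ls).BoundedFormula α b) →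
    List ((bigLang k Ls).BoundedFormula α a × (bigLang k Ls).BoundedFormula α b)
  | [], _ => []
  | p :: l₁, l₂ => (l₂.map fun q => (p.1 ⊔ q.1, p.2 ⊔ q.2)) ++ orCNF l₁ l₂

theorem negCNF_prop {a b : ℕ}
    (P : (bigLang k Ls).BoundedFormula α a → Prop)
    (Q : (bigLang k Ls).BoundedFormula α b → Prop)
    (hP0 : P ⊥) (hPn : ∀ φ, P φ → P φ.not) (hPs : ∀ φ ψ, P φ → P ψ → P (φ ⊔ ψ))
    (hQ0 : Q ⊥) (hQn : ∀ φ, Q φ → Q φ.not) (hQs : ∀ φ ψ, Q φ → Q ψ → Q (φ ⊔ ψ))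
    (l : List ((bigLang k Ls).BoundedFormula α a × (bigLang k Ls).BoundedFormula α b))
    (h : ∀ p ∈ l, P p.1 ∧ Q p.2) :
    ∀ p ∈ negCNF l, P p.1 ∧ Q p.2 := by
  induction l with
  | nil =>
      intro p hp
      simp only [negCNF, List.mem_singleton] at hp
      subst hp; exact ⟨hP0, hQ0⟩
  | cons p l ih =>
      intro q hq
      have hph := h p (by simp)
      have ih' := ih fun r hr => h r (by simp [hr])
      simp only [negCNF, List.mem_append, List.mem_map] at hq
      rcases hq with ⟨r, hr, rfl⟩ | ⟨r, hr, rfl⟩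
      · exact ⟨hPs _ _ (hPn _ hph.1) (ih' r hr).1, (ih' r hr).2⟩
      · exact ⟨(ih' r hr).1, hQs _ _ (hQn _ hph.2) (ih' r hr).2⟩

theorem orCNF_prop {a b : ℕ}
    (P : (bigLang k Ls).BoundedFormula α a → Prop)
    (Q : (bigLang k Ls).BoundedFormula α b → Prop)
    (hPs : ∀ φ ψ, P φ → P ψ → P (φ ⊔ ψ))
    (hQs : ∀ φ ψ, Q φ → Q ψ → Q (φ ⊔ ψ))
    (l₁ l₂ : List ((bigLang k Ls).BoundedFormula α a × (bigLang k Ls).BoundedFormula α b))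
    (h₁ : ∀ p ∈ l₁, P p.1 ∧ Q p.2) (h₂ : ∀ p ∈ l₂, P p.1 ∧ Q p.2) :
    ∀ p ∈ orCNF l₁ l₂, P p.1 ∧ Q p.2 := by
  induction l₁ with
  | nil => intro p hp; simp [orCNF] at hp
  | cons p l ih =>
      intro q hq
      simp only [orCNF, List.mem_append, List.mem_map] at hq
      rcases hq with ⟨r, hr, rfl⟩ | hq
      · have hph := h₁ p (by simp)
        have hrh := h₂ r hr
        exact ⟨hPs _ _ hph.1 hrh.1, hQs _ _ hph.2 hrh.2⟩
      · exact ih (fun r hr => h₁ r (by simp [hr])) q hq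

theorem negCNF_val {a b : ℕ}
    (va : (bigLang k Ls).BoundedFormula α a → Prop)
    (ve : (bigLang k Ls).BoundedFormula α b → Prop)
    (ha0 : va ⊥ ↔ False) (han : ∀ φ, va φ.not ↔ ¬ va φ)
    (has : ∀ φ ψ, va (φ ⊔ ψ) ↔ va φ ∨ va ψ)
    (he0 : ve ⊥ ↔ False) (hen : ∀ φ, ve φ.not ↔ ¬ ve φ)
    (hes : ∀ φ ψ, ve (φ ⊔ ψ) ↔ ve φ ∨ ve ψ)
    (l : List ((bigLang k Ls).BoundedFormula α a × (bigLang k Ls).BoundedFormula α b)) :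
    (∀ p ∈ negCNF l, va p.1 ∨ ve p.2) ↔ ¬ (∀ p ∈ l, va p.1 ∨ ve p.2) := by
  induction l with
  | nil => simp [negCNF, ha0, he0]
  | cons p l ih =>
      have hsplit : (∀ q ∈ negCNF (p :: l), va q.1 ∨ ve q.2) ↔
          ((∀ q ∈ negCNF l, va (p.1.not ⊔ q.1) ∨ ve q.2) ∧
           (∀ q ∈ negCNF l, va q.1 ∨ ve (p.2.not ⊔ q.2))) := by
        simp only [negCNF, List.forall_mem_append, List.forall_mem_map]
      rw [hsplit, List.forall_mem_cons]
      constructor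
      · rintro ⟨h1, h2⟩ ⟨hor, hl⟩
        have hN : ∀ q ∈ negCNF l, va q.1 ∨ ve q.2 := by
          intro q hq
          rcases hor with hA | hE
          · have := h1 q hq; rw [has, han] at this; tauto
          · have := h2 q hq; rw [hes, hen] at this; tauto
        exact (ih.mp hN) hl
      · intro h
        by_cases hl : ∀ q ∈ l, va q.1 ∨ ve q.2
        · have hnor : ¬(va p.1 ∨ ve p.2) := fun hor => h ⟨hor, hl⟩
          constructor
          · intro q hq; rw [has, han]; tauto
          · intro q hq; rw [hes, hen]; tauto
        · have hN := ih.mpr hl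
          constructor
          · intro q hq; have := hN q hq; rw [has, han]; tauto
          · intro q hq; have := hN q hq; rw [hes, hen]; tauto

theorem orCNF_val {a b : ℕ}
    (va : (bigLang k Ls).BoundedFormula α a → Prop)
    (ve : (bigLang k Ls).BoundedFormula α b → Prop)
    (has : ∀ φ ψ, va (φ ⊔ ψ) ↔ va φ ∨ va ψ)
    (hes : ∀ φ ψ, ve (φ ⊔ ψ) ↔ ve φ ∨ ve ψ)
    (l₁ l₂ : List ((bigLang k Ls).BoundedFormula α a × (bigLang k Ls).BoundedFormula α b)) :
    (∀ p ∈ orCNF l₁ l₂, va p.1 ∨ ve p.2) ↔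
      (∀ p ∈ l₁, va p.1 ∨ ve p.2) ∨ (∀ p ∈ l₂, va p.1 ∨ ve p.2) := by
  induction l₁ with
  | nil => simp [orCNF]
  | cons p l ih =>
      have hsplit : (∀ q ∈ orCNF (p :: l) l₂, va q.1 ∨ ve q.2) ↔
          ((∀ q ∈ l₂, va (p.1 ⊔ q.1) ∨ ve (p.2 ⊔ q.2)) ∧
           (∀ q ∈ orCNF l l₂, va q.1 ∨ ve q.2)) := by
        simp only [orCNF, List.forall_mem_append, List.forall_mem_map]
      rw [hsplit, ih, List.forall_mem_cons]
      constructor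
      · rintro ⟨h1, h2 | h2⟩
        · by_cases hp : va p.1 ∨ ve p.2
          · exact Or.inl ⟨hp, h2⟩
          · right; intro q hq; have := h1 q hq; rw [has, hes] at this; tauto
        · exact Or.inr h2
      · rintro (⟨hp, hV⟩ | hV)
        · exact ⟨fun q hq => by rw [has, hes]; tauto, Or.inl hV⟩
        · exact ⟨fun q hq => by rw [has, hes]; have := hV q hq; tauto, Or.inr hV⟩

/-! Helper facts about `Fin.snoc` and quantifier manipulation. -/

theorem snoc_eval {γ : Type*} {m : ℕ} (xs : Fin m → γ) (z : γ) (p : Fin (m + 1)) :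
    (Fin.snoc xs z : Fin (m + 1) → γ) p = if h : p.1 < m then xs ⟨p.1, h⟩ else z := by
  obtain ⟨pv, plt⟩ := p
  by_cases h : pv < m
  · rw [dif_pos h]
    have hp : (⟨pv, plt⟩ : Fin (m + 1)) = Fin.castSucc ⟨pv, h⟩ := Fin.ext rfl
    have h2 : xs ⟨(⟨pv, plt⟩ : Fin (m + 1)).1, h⟩ = xs ⟨pv, h⟩ := rfl
    rw [h2]
    exact (congrArg (Fin.snoc xs z) hp).trans (@Fin.snoc_castSucc m (fun _ => γ) z xs ⟨pv, h⟩)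
  · rw [dif_neg h]
    have h2 : pv = m := by omega
    subst h2
    have hp : (⟨pv, plt⟩ : Fin (pv + 1)) = Fin.last pv := Fin.ext rfl
    exact (congrArg (Fin.snoc xs z) hp).trans (@Fin.snoc_last pv (fun _ => γ) z xs)

theorem forall_swap_or {β γ : Type*} (l : List γ) (P : γ → Prop) (Q : γ → β → Prop)
    (R : β → Prop) :
    (∀ z, R z → ∀ p ∈ l, P p ∨ Q p z) ↔ (∀ p ∈ l, P p ∨ ∀ z, R z → Q p z) := by
  constructor
  · intro h p hp
    by_cases hP : P p
    · exact Or.inl hP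
    · exact Or.inr fun z hz => (h z hz p hp).resolve_left hP
  · intro h z hz p hp
    rcases h p hp with h' | h'
    · exact Or.inl h'
    · exact Or.inr (h' z hz)

theorem forall_swap_or' {β γ : Type*} (l : List γ) (P : γ → Prop) (Q : γ → β → Prop)
    (R : β → Prop) :
    (∀ z, R z → ∀ p ∈ l, Q p z ∨ P p) ↔ (∀ p ∈ l, (∀ z, R z → Q p z) ∨ P p) := by
  have := forall_swap_or l P Q R
  constructor
  · intro h p hp
    have := (this.1 fun z hz p hp => (h z hz p hp).symm) p hp
    tauto
  · intro h z hz p hp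
    have := this.2 (fun p hp => (h p hp).symm) z hz p hp
    tauto

/-- Universal quantification relativized to the sort `R_i`. -/
def relAll (i : Fin k) {m : ℕ} (φ : (bigLang k Ls).BoundedFormula α (m + 1)) :
    (bigLang k Ls).BoundedFormula α m :=
  ((BoundedFormula.rel (Sum.inr (⟨PLift.up rfl, i⟩ : PLift (1 = 1) × Fin k))
      (fun _ => Term.var (Sum.inr (Fin.last m)))).imp φ).all

theorem IsRel.relAll {i : Fin k} {m : ℕ} {φ : (bigLang k Ls).BoundedFormula α (m + 1)}
    (h : IsRel i φ) : IsRel i (Stmt5.relAll i φ) :=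
  IsRel.all h

theorem realize_relAll {i : Fin k} {m : ℕ} {φ : (bigLang k Ls).BoundedFormula α (m + 1)}
    {v : α → Σ i, A i} {ys : Fin m → Σ i, A i} :
    (Stmt5.relAll i φ).Realize v ys ↔
      ∀ z : Σ i, A i, z.1 = i → φ.Realize v (Fin.snoc ys z) := by
  rw [relAll, BoundedFormula.realize_all]
  refine forall_congr' fun z => ?_
  erw [BoundedFormula.realize_imp, realize_rel', relMap_inr]
  constructor
  · intro h hz
    refine h fun j => ?_
    simp [Term.realize, Fin.snoc_last, hz]
  · intro h h'
    refine h ?_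
    have := h' 0
    simpa [Term.realize, Fin.snoc_last] using this

/-! Reindexing machinery: dropping the (unused) variable at position `n`. -/

theorem realize_falsum {n : ℕ} (v : α → Σ j, A j) (xs : Fin n → Σ j, A j) :
    (BoundedFormula.falsum : (bigLang k Ls).BoundedFormula α n).Realize v xs ↔ False :=
  Iff.rfl

def embA (n : ℕ) {N : ℕ} (hn : n < N) (u : Fin (n + 1)) : Fin N :=
  ⟨u.1, by omega⟩

def embE (n : ℕ) {m N : ℕ} (hN : N = m + 1) (hm : n ≤ m) (u : Fin m) : Fin N :=
  if h : u.1 < n then ⟨u.1, by omega⟩ else ⟨u.1 + 1, by omega⟩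

/-- Valuation of the `A`-components (the variables `0,…,n-1` together with the pivot `n`,
which becomes the last variable). -/
def eA (n : ℕ) {N : ℕ} (hn : n < N) (xs : Fin N → Σ j, A j) : Fin (n + 1) → Σ j, A j :=
  fun u => xs (embA n hn u)

/-- Valuation of the `E`-components (all variables except the pivot `n`). -/
def eE (n : ℕ) {m N : ℕ} (hN : N = m + 1) (hm : n ≤ m) (xs : Fin N → Σ j, A j) :
    Fin m → Σ j, A j :=
  fun u => xs (embE n hN hm u)

def dFin {N m n : ℕ} (hN : N = m + 1) (hm : n ≤ m) (p : Fin N) (hp : p.1 ≠ n) : Fin m :=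
  if h : p.1 < n then ⟨p.1, by omega⟩ else ⟨p.1 - 1, by omega⟩

theorem embE_dFin {N m n : ℕ} (hN : N = m + 1) (hm : n ≤ m) (p : Fin N) (hp : p.1 ≠ n) :
    embE n hN hm (dFin hN hm p hp) = p := by
  by_cases h : p.1 < n
  · simp only [dFin, embE, dif_pos h]
  · simp only [dFin, dif_neg h]
    have h2 : ¬((⟨p.1 - 1, by omega⟩ : Fin m).1 < n) := by
      show ¬(p.1 - 1 < n)
      omega
    simp only [embE, dif_neg h2]
    exact Fin.ext (show p.1 - 1 + 1 = p.1 by omega)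

/-- Reindexing a non-pivot variable. -/
def dVarSum {N m n : ℕ} (hN : N = m + 1) (hm : n ≤ m) (u : α ⊕ Fin N)
    (h : ∀ p : Fin N, u = Sum.inr p → p.1 ≠ n) : α ⊕ Fin m :=
  match u, h with
  | Sum.inl a, _ => Sum.inl a
  | Sum.inr p, h => Sum.inr (dFin hN hm p (h p rfl))

theorem elim_dVarSum {N m n : ℕ} (hN : N = m + 1) (hm : n ≤ m) (u : α ⊕ Fin N)
    (h : ∀ p : Fin N, u = Sum.inr p → p.1 ≠ n) (v : α → Σ j, A j) (xs : Fin N → Σ j, A j) :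
    Sum.elim v (eE n hN hm xs) (dVarSum hN hm u h) = Sum.elim v xs u := by
  cases u with
  | inl a => rfl
  | inr p =>
      show eE n hN hm xs (dFin hN hm p (h p rfl)) = xs p
      rw [eE, embE_dFin]

/-- Reindexing a term not containing the pivot variable. -/
def dTerm {N m n : ℕ} (hN : N = m + 1) (hm : n ≤ m) (t : (bigLang k Ls).Term (α ⊕ Fin N))
    (h : ∀ p : Fin N, tvar t = Sum.inr p → p.1 ≠ n) : (bigLang k Ls).Term (α ⊕ Fin m) :=
  Term.var (dVarSum hN hm (tvar t) h)

theorem realize_dTerm {N m n : ℕ} (hN : N = m + 1) (hm : n ≤ m)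
    (t : (bigLang k Ls).Term (α ⊕ Fin N))
    (h : ∀ p : Fin N, tvar t = Sum.inr p → p.1 ≠ n)
    (v : α → Σ j, A j) (xs : Fin N → Σ j, A j) :
    (dTerm hN hm t h).realize (Sum.elim v (eE n hN hm xs)) = t.realize (Sum.elim v xs) := by
  conv_rhs => rw [tvar_eq t]
  exact elim_dVarSum hN hm (tvar t) h v xs

/-- Reindexing an "outer" variable (index `< n`, or a free variable) into `Fin (n+1)`. -/
def oVarSum {N n : ℕ} (u : α ⊕ Fin N) (h : ∀ q : Fin N, u = Sum.inr q → q.1 < n) :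
    α ⊕ Fin (n + 1) :=
  match u, h with
  | Sum.inl a, _ => Sum.inl a
  | Sum.inr q, h => Sum.inr ⟨q.1, by have := h q rfl; omega⟩

theorem elim_oVarSum {N n : ℕ} (hn : n < N) (u : α ⊕ Fin N)
    (h : ∀ q : Fin N, u = Sum.inr q → q.1 < n) (v : α → Σ j, A j) (xs : Fin N → Σ j, A j) :
    Sum.elim v (eA n hn xs) (oVarSum u h) = Sum.elim v xs u := by
  cases u with
  | inl a => rfl
  | inr q =>
      show eA n hn xs ⟨q.1, _⟩ = xs q
      exact congrArg xs (Fin.ext rfl)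

/-- **Separation lemma.**  An `A_{i'}`-formula, evaluated at a point where the variable at
position `n` (the "pivot") lies in the sort `R_i` (`i ≠ i'`) and all variables beyond
position `n` lie in the sort `R_{i'}`, is equivalent to a conjunction of clauses `Aₚ ∨ Eₚ`
where `Aₚ` is an `A_i`-formula in the outer variables and the pivot, and `Eₚ` is an
`A_{i'}`-formula not involving the pivot. -/
theorem lemmaA (i i' : Fin k) (hne : i ≠ i') (n : ℕ) {N : ℕ}
    (φ : (bigLang k Ls).BoundedFormula α N) (h : IsRel i' φ) :
    ∀ (m : ℕ) (hN : N = m + 1) (hm : n ≤ m),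
    ∃ l : List ((bigLang k Ls).BoundedFormula α (n + 1) ×
        (bigLang k Ls).BoundedFormula α m),
      (∀ p ∈ l, IsRel i p.1) ∧ (∀ p ∈ l, IsRel i' p.2) ∧
      ∀ (v : α → Σ j, A j) (xs : Fin N → Σ j, A j),
        (∀ p : Fin N, p.1 = n → (xs p).1 = i) →
        (∀ p : Fin N, n < p.1 → (xs p).1 = i') →
        (φ.Realize v xs ↔
          ∀ p ∈ l, p.1.Realize v (eA n (by omega) xs) ∨ p.2.Realize v (eE n hN hm xs)) := by
  induction h with
  | falsum =>
      intro m hN hm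
      refine ⟨[(⊥, ⊥)], by simp [IsRel.bot], by simp [IsRel.bot], fun v xs hx hz => ?_⟩
      rw [realize_falsum]
      simp
  | @equal nn t₁ t₂ =>
      intro m hN hm
      by_cases h1 : ∃ p : Fin nn, tvar t₁ = Sum.inr p ∧ p.1 = n
      · by_cases h2 : ∃ p : Fin nn, tvar t₂ = Sum.inr p ∧ p.1 = n
        · -- both terms are the pivot variable: the atom is true
          refine ⟨[], by simp, by simp, fun v xs hx hz => ?_⟩
          obtain ⟨p1, hp1, hp1n⟩ := h1
          obtain ⟨p2, hp2, hp2n⟩ := h2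
          have hpp : p1 = p2 := Fin.ext (hp1n.trans hp2n.symm)
          rw [realize_equal]
          conv_lhs => rw [tvar_eq t₁, tvar_eq t₂, hp1, hp2, hpp]
          simp
        · by_cases hin : ∃ q : Fin nn, tvar t₂ = Sum.inr q ∧ n < q.1
          · -- pivot = inner variable: false (different sorts)
            refine ⟨[(⊥, ⊥)], by simp [IsRel.bot], by simp [IsRel.bot],
              fun v xs hx hz => ?_⟩
            obtain ⟨p1, hp1, hp1n⟩ := h1
            obtain ⟨q, hq, hqn⟩ := hin
            rw [realize_equal]
            conv_lhs => rw [tvar_eq t₁, tvar_eq t₂, hp1, hq]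
            simp only [Term.realize, Sum.elim_inr]
            constructor
            · intro hEq
              exact absurd ((congrArg Sigma.fst hEq).symm.trans (hx p1 hp1n)) (by
                rw [hz q hqn]; exact fun hc => hne hc.symm)
            · intro hF
              have := hF (⊥, ⊥) (by simp)
              simp at this
          · -- pivot = outer variable: an `A`-atom
            have hout : ∀ q : Fin nn, tvar t₂ = Sum.inr q → q.1 < n := by
              intro q hq
              by_contra hcon
              rcases Nat.lt_or_ge n q.1 with hlt | hge
              · exact hin ⟨q, hq, hlt⟩
              · exact h2 ⟨q, hq, by omega⟩
            refine ⟨[(BoundedFormula.equal (Term.var (Sum.inr (Fin.last n)))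
                (Term.var (oVarSum (tvar t₂) hout)), ⊥)],
              by simp [IsRel.equal], by simp [IsRel.bot], fun v xs hx hz => ?_⟩
            obtain ⟨p1, hp1, hp1n⟩ := h1
            rw [realize_equal]
            conv_lhs => rw [tvar_eq t₁, tvar_eq t₂, hp1]
            simp only [List.mem_singleton, forall_eq]
            rw [realize_equal]
            simp only [Term.realize, Sum.elim_inr]
            rw [elim_oVarSum (show n < nn by omega) (tvar t₂) hout v xs]
            have hA : eA n (show n < nn by omega) xs (Fin.last n) = xs p1 :=
              congrArg xs (Fin.ext (by simp [embA, hp1n]))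
            rw [hA]
            simp
      · by_cases h2 : ∃ p : Fin nn, tvar t₂ = Sum.inr p ∧ p.1 = n
        · -- symmetric: t₂ is the pivot
          by_cases hin : ∃ q : Fin nn, tvar t₁ = Sum.inr q ∧ n < q.1
          · refine ⟨[(⊥, ⊥)], by simp [IsRel.bot], by simp [IsRel.bot],
              fun v xs hx hz => ?_⟩
            obtain ⟨p2, hp2, hp2n⟩ := h2
            obtain ⟨q, hq, hqn⟩ := hin
            rw [realize_equal]
            conv_lhs => rw [tvar_eq t₁, tvar_eq t₂, hp2, hq]
            simp only [Term.realize, Sum.elim_inr]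
            constructor
            · intro hEq
              exact absurd ((congrArg Sigma.fst hEq).trans (hx p2 hp2n)) (by
                rw [hz q hqn]; exact fun hc => hne hc.symm)
            · intro hF
              have := hF (⊥, ⊥) (by simp)
              simp at this
          · have hout : ∀ q : Fin nn, tvar t₁ = Sum.inr q → q.1 < n := by
              intro q hq
              by_contra hcon
              rcases Nat.lt_or_ge n q.1 with hlt | hge
              · exact hin ⟨q, hq, hlt⟩
              · exact h1 ⟨q, hq, by omega⟩
            refine ⟨[(BoundedFormula.equal (Term.var (oVarSum (tvar t₁) hout))
                (Term.var (Sum.inr (Fin.last n))), ⊥)],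
              by simp [IsRel.equal], by simp [IsRel.bot], fun v xs hx hz => ?_⟩
            obtain ⟨p2, hp2, hp2n⟩ := h2
            rw [realize_equal]
            conv_lhs => rw [tvar_eq t₁, tvar_eq t₂, hp2]
            simp only [List.mem_singleton, forall_eq]
            rw [realize_equal]
            simp only [Term.realize, Sum.elim_inr]
            rw [elim_oVarSum (show n < nn by omega) (tvar t₁) hout v xs]
            have hA : eA n (show n < nn by omega) xs (Fin.last n) = xs p2 :=
              congrArg xs (Fin.ext (by simp [embA, hp2n]))
            rw [hA]
            simp
        · -- neither term is the pivot: an `E`-atom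
          have h1' : ∀ p : Fin nn, tvar t₁ = Sum.inr p → p.1 ≠ n :=
            fun p hp hn => h1 ⟨p, hp, hn⟩
          have h2' : ∀ p : Fin nn, tvar t₂ = Sum.inr p → p.1 ≠ n :=
            fun p hp hn => h2 ⟨p, hp, hn⟩
          refine ⟨[(⊥, BoundedFormula.equal (dTerm hN hm t₁ h1') (dTerm hN hm t₂ h2'))],
            by simp [IsRel.bot], by simp [IsRel.equal], fun v xs hx hz => ?_⟩
          simp only [List.mem_singleton, forall_eq]
          rw [realize_equal, realize_equal, realize_dTerm, realize_dTerm]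
          simp
  | @rel nn mR r ts =>
      intro m hN hm
      by_cases hx : ∃ q : Fin mR, ∃ p : Fin nn, tvar (ts q) = Sum.inr p ∧ p.1 = n
      · refine ⟨[(⊥, ⊥)], by simp [IsRel.bot], by simp [IsRel.bot], fun v xs hxc hzc => ?_⟩
        erw [realize_rel', relMap_inl]
        simp only [List.mem_singleton, forall_eq]
        constructor
        · rintro ⟨w, hw, _⟩
          obtain ⟨q, p, hq, hpn⟩ := hx
          have := hw q
          rw [tvar_eq (ts q), hq] at this
          simp only [Term.realize, Sum.elim_inr] at this
          have hfst := congrArg Sigma.fst this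
          rw [hxc p hpn] at hfst
          exact absurd hfst hne
        · intro hF
          exact absurd hF (by simp)
      · have hgood : ∀ q : Fin mR, ∀ p : Fin nn, tvar (ts q) = Sum.inr p → p.1 ≠ n :=
          fun q p hp hn => hx ⟨q, p, hp, hn⟩
        refine ⟨[(⊥, BoundedFormula.rel (Sum.inl ⟨i', r⟩)
            (fun q => dTerm hN hm (ts q) (hgood q)))],
          by simp [IsRel.bot], by simp; exact IsRel.rel r _, fun v xs hxc hzc => ?_⟩
        simp only [List.mem_singleton, forall_eq]
        erw [realize_rel', realize_rel']
        have harg : (fun q => Term.realize (Sum.elim v (eE n hN hm xs))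
            (dTerm hN hm (ts q) (hgood q))) = fun q => Term.realize (Sum.elim v xs) (ts q) :=
          funext fun q => realize_dTerm hN hm (ts q) (hgood q) v xs
        rw [harg]
        simp
  | @relR nn ts =>
      intro m hN hm
      by_cases hx : ∃ q : Fin 1, ∃ p : Fin nn, tvar (ts q) = Sum.inr p ∧ p.1 = n
      · refine ⟨[(⊥, ⊥)], by simp [IsRel.bot], by simp [IsRel.bot], fun v xs hxc hzc => ?_⟩
        erw [realize_rel', relMap_inr]
        simp only [List.mem_singleton, forall_eq]
        constructor
        · intro hw
          obtain ⟨q, p, hq, hpn⟩ := hx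
          have := hw q
          rw [tvar_eq (ts q), hq] at this
          simp only [Term.realize, Sum.elim_inr] at this
          rw [hxc p hpn] at this
          exact absurd this hne
        · intro hF
          exact absurd hF (by simp)
      · have hgood : ∀ q : Fin 1, ∀ p : Fin nn, tvar (ts q) = Sum.inr p → p.1 ≠ n :=
          fun q p hp hn => hx ⟨q, p, hp, hn⟩
        refine ⟨[(⊥, BoundedFormula.rel
            ((Sum.inr ⟨PLift.up rfl, i'⟩) : (bigLang k Ls).Relations 1)
            (fun q => dTerm hN hm (ts q) (hgood q)))],
          by simp [IsRel.bot], by simp; exact IsRel.relR _, fun v xs hxc hzc => ?_⟩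
        simp only [List.mem_singleton, forall_eq]
        erw [realize_rel', realize_rel']
        have harg : (fun q => Term.realize (Sum.elim v (eE n hN hm xs))
            (dTerm hN hm (ts q) (hgood q))) = fun q => Term.realize (Sum.elim v xs) (ts q) :=
          funext fun q => realize_dTerm hN hm (ts q) (hgood q) v xs
        rw [harg]
        simp
  | @imp nn φ₁ φ₂ hφ₁ hφ₂ ih₁ ih₂ =>
      intro m hN hm
      obtain ⟨l₁, hl₁A, hl₁E, hl₁sem⟩ := ih₁ m hN hm
      obtain ⟨l₂, hl₂A, hl₂E, hl₂sem⟩ := ih₂ m hN hm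
      refine ⟨orCNF (negCNF l₁) l₂, ?_, ?_, ?_⟩
      · intro p hp
        exact (orCNF_prop (IsRel i) (IsRel i') (fun _ _ => IsRel.sup) (fun _ _ => IsRel.sup)
          (negCNF l₁) l₂
          (negCNF_prop _ _ IsRel.bot (fun _ => IsRel.not) (fun _ _ => IsRel.sup)
            IsRel.bot (fun _ => IsRel.not) (fun _ _ => IsRel.sup) l₁
            (fun q hq => ⟨hl₁A q hq, hl₁E q hq⟩))
          (fun q hq => ⟨hl₂A q hq, hl₂E q hq⟩) p hp).1
      · intro p hp
        exact (orCNF_prop (IsRel i) (IsRel i') (fun _ _ => IsRel.sup) (fun _ _ => IsRel.sup)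
          (negCNF l₁) l₂
          (negCNF_prop _ _ IsRel.bot (fun _ => IsRel.not) (fun _ _ => IsRel.sup)
            IsRel.bot (fun _ => IsRel.not) (fun _ _ => IsRel.sup) l₁
            (fun q hq => ⟨hl₁A q hq, hl₁E q hq⟩))
          (fun q hq => ⟨hl₂A q hq, hl₂E q hq⟩) p hp).2
      · intro v xs hxc hzc
        rw [BoundedFormula.realize_imp, hl₁sem v xs hxc hzc, hl₂sem v xs hxc hzc,
          orCNF_val (fun ψ => ψ.Realize v (eA n (by omega) xs))
            (fun ψ => ψ.Realize v (eE n hN hm xs))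
            (fun _ _ => BoundedFormula.realize_sup) (fun _ _ => BoundedFormula.realize_sup),
          negCNF_val (fun ψ => ψ.Realize v (eA n (by omega) xs))
            (fun ψ => ψ.Realize v (eE n hN hm xs))
            (by simp) (fun _ => BoundedFormula.realize_not)
            (fun _ _ => BoundedFormula.realize_sup)
            (by simp) (fun _ => BoundedFormula.realize_not)
            (fun _ _ => BoundedFormula.realize_sup)]
        tauto
  | @all nφ φ₀ hφ₀ ih =>
      intro m hN hm
      subst hN
      obtain ⟨l', hlA, hlE, hsem⟩ := ih (m + 1) rfl (by omega)
      refine ⟨l'.map fun p => (p.1, relAll i' p.2), ?_, ?_, ?_⟩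
      · intro p hp
        rw [List.mem_map] at hp
        obtain ⟨q, hq, rfl⟩ := hp
        exact hlA q hq
      · intro p hp
        rw [List.mem_map] at hp
        obtain ⟨q, hq, rfl⟩ := hp
        exact IsRel.relAll (hlE q hq)
      · intro v xs hxc hzc
        rw [BoundedFormula.realize_all]
        have hguard : ∀ z : Σ j, A j,
            ((BoundedFormula.rel ((Sum.inr ⟨PLift.up rfl, i'⟩) : (bigLang k Ls).Relations 1)
              (fun _ => Term.var (Sum.inr (Fin.last (m + 1)))) :
                (bigLang k Ls).BoundedFormula α (m + 1 + 1)).Realize v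
                (Fin.snoc xs z) ↔ z.1 = i') := by
          intro z
          erw [realize_rel', relMap_inr]
          constructor
          · intro h
            have := h 0
            simpa [Term.realize, Fin.snoc_last] using this
          · intro h j
            simpa [Term.realize, Fin.snoc_last] using h
        have e1 : ∀ z : Σ j, A j,
            (eA n (by omega) (Fin.snoc xs z : Fin (m + 1 + 1) → Σ j, A j)) =
              eA n (by omega) xs := by
          intro z
          funext u
          show (Fin.snoc xs z : Fin (m + 1 + 1) → Σ j, A j) (embA n (by omega) u) =
            xs (embA n (by omega) u)
          rw [snoc_eval]
          rw [dif_pos (show (embA n (by omega : n < m + 1 + 1) u).1 < m + 1 by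
            show u.1 < m + 1; omega)]
          exact congrArg xs (Fin.ext rfl)
        have e2 : ∀ z : Σ j, A j,
            (eE n rfl (by omega : n ≤ m + 1) (Fin.snoc xs z : Fin (m + 1 + 1) → Σ j, A j)) =
              Fin.snoc (eE n rfl (by omega : n ≤ m) xs) z := by
          intro z
          funext u
          show (Fin.snoc xs z : Fin (m + 1 + 1) → Σ j, A j) (embE n rfl (by omega) u) =
            (Fin.snoc (eE n rfl (by omega : n ≤ m) xs) z : Fin (m + 1) → Σ j, A j) u
          rw [snoc_eval, snoc_eval]
          by_cases h1 : u.1 < n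
          · rw [dif_pos (show (embE n rfl (by omega : n ≤ m + 1) u).1 < m + 1 by
              simp only [embE, dif_pos h1]; omega)]
            rw [dif_pos (show u.1 < m by omega)]
            show xs _ = eE n rfl _ xs _
            rw [eE]
            refine congrArg xs (Fin.ext ?_)
            simp only [embE, dif_pos h1]
          · by_cases h2 : u.1 < m
            · rw [dif_pos (show (embE n rfl (by omega : n ≤ m + 1) u).1 < m + 1 by
                simp only [embE, dif_neg h1]; omega)]
              rw [dif_pos h2]
              show xs _ = eE n rfl _ xs _
              rw [eE]
              refine congrArg xs (Fin.ext ?_)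
              simp only [embE, dif_neg h1]
            · rw [dif_neg (show ¬((embE n rfl (by omega : n ≤ m + 1) u).1 < m + 1) by
                simp only [embE, dif_neg h1]; omega)]
              rw [dif_neg h2]
        have key : ∀ z : Σ j, A j, z.1 = i' →
            (φ₀.Realize v (Fin.snoc xs z) ↔
              ∀ p ∈ l', p.1.Realize v (eA n (by omega) xs) ∨
                p.2.Realize v (Fin.snoc (eE n rfl (by omega : n ≤ m) xs) z)) := by
          intro z hzi
          have hxc' : ∀ p : Fin (m + 1 + 1), p.1 = n → ((Fin.snoc xs z :
              Fin (m + 1 + 1) → Σ j, A j) p).1 = i := by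
            intro p hp
            rw [snoc_eval, dif_pos (show p.1 < m + 1 by omega)]
            exact hxc ⟨p.1, by omega⟩ hp
          have hzc' : ∀ p : Fin (m + 1 + 1), n < p.1 → ((Fin.snoc xs z :
              Fin (m + 1 + 1) → Σ j, A j) p).1 = i' := by
            intro p hp
            rw [snoc_eval]
            by_cases hpm : p.1 < m + 1
            · rw [dif_pos hpm]
              exact hzc ⟨p.1, by omega⟩ hp
            · rw [dif_neg hpm]
              exact hzi
          have := hsem v (Fin.snoc xs z) hxc' hzc'
          rw [e1 z, e2 z] at this
          exact this
        constructor
        · intro hall p hp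
          rw [List.mem_map] at hp
          obtain ⟨q, hq, rfl⟩ := hp
          have hswap := (forall_swap_or l'
            (fun p => p.1.Realize v (eA n (by omega) xs))
            (fun p z => p.2.Realize v (Fin.snoc (eE n rfl (by omega : n ≤ m) xs) z))
            (fun z : Σ j, A j => z.1 = i')).1
            (fun z hz => (key z hz).1 (by
              have := hall z
              rw [BoundedFormula.realize_imp, hguard z] at this
              exact this hz))
          have := hswap q hq
          rcases this with hA | hE
          · exact Or.inl hA
          · refine Or.inr ?_
            rw [realize_relAll]
            exact hE
        · intro hcl z
          rw [BoundedFormula.realize_imp, hguard z]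
          intro hz
          rw [key z hz]
          intro p hp
          have := hcl (p.1, relAll i' p.2) (List.mem_map_of_mem hp)
          rcases this with hA | hE
          · exact Or.inl hA
          · refine Or.inr ?_
            rw [realize_relAll] at hE
            exact hE z hz

/-- **Clause form for Boolean combinations.**  A Boolean combination of sorted formulas at
level `n+1`, evaluated at points whose last coordinate lies in the sort `R_i`, is
equivalent to a conjunction of clauses `Aₚ ∨ Eₚ` with `Aₚ` an `A_i`-formula and `Eₚ` a
Boolean combination of sorted formulas not involving the last variable. -/
theorem lemmaB (i : Fin k) {N : ℕ} {ψ : (bigLang k Ls).BoundedFormula α N} (h : IsBC ψ) :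
    ∀ (n : ℕ) (hN : N = n + 1),
    ∃ l : List ((bigLang k Ls).BoundedFormula α (n + 1) ×
        (bigLang k Ls).BoundedFormula α n),
      (∀ p ∈ l, IsRel i p.1) ∧ (∀ p ∈ l, IsBC p.2) ∧
      ∀ (v : α → Σ j, A j) (xs : Fin N → Σ j, A j),
        (∀ p : Fin N, p.1 = n → (xs p).1 = i) →
        (ψ.Realize v xs ↔
          ∀ p ∈ l, p.1.Realize v (eA n (by omega) xs) ∨
            p.2.Realize v (eE n hN (le_refl n) xs)) := by
  induction h with
  | @of i' ψ' hRel =>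
      by_cases hii : i' = i
      · subst hii
        intro n hN
        subst hN
        refine ⟨[(ψ', ⊥)], by simp [hRel], by simp [IsBC.bot], fun v xs hx => ?_⟩
        have hid : eA n (by omega) xs = xs := funext fun u => congrArg xs (Fin.ext rfl)
        rw [hid]
        simp
      · intro n hN
        obtain ⟨l, hA, hE, hsem⟩ :=
          lemmaA (A := A) i i' (fun hc => hii hc.symm) n ψ' hRel n hN (le_refl n)
        refine ⟨l, hA, fun p hp => IsBC.of i' (hE p hp), fun v xs hx => ?_⟩
        exact hsem v xs hx (fun p hp => absurd hp (by omega))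
  | falsum =>
      intro n hN
      refine ⟨[(⊥, ⊥)], by simp [IsRel.bot], by simp [IsBC.bot], fun v xs hx => ?_⟩
      rw [realize_falsum]
      simp
  | @imp ψ₁ ψ₂ h₁ h₂ ih₁ ih₂ =>
      intro n hN
      obtain ⟨l₁, hl₁A, hl₁E, hl₁sem⟩ := ih₁ n hN
      obtain ⟨l₂, hl₂A, hl₂E, hl₂sem⟩ := ih₂ n hN
      refine ⟨orCNF (negCNF l₁) l₂, ?_, ?_, ?_⟩
      · intro p hp
        exact (orCNF_prop (IsRel i) IsBC (fun _ _ => IsRel.sup) (fun _ _ => IsBC.sup)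
          (negCNF l₁) l₂
          (negCNF_prop _ _ IsRel.bot (fun _ => IsRel.not) (fun _ _ => IsRel.sup)
            IsBC.bot (fun _ => IsBC.not) (fun _ _ => IsBC.sup) l₁
            (fun q hq => ⟨hl₁A q hq, hl₁E q hq⟩))
          (fun q hq => ⟨hl₂A q hq, hl₂E q hq⟩) p hp).1
      · intro p hp
        exact (orCNF_prop (IsRel i) IsBC (fun _ _ => IsRel.sup) (fun _ _ => IsBC.sup)
          (negCNF l₁) l₂
          (negCNF_prop _ _ IsRel.bot (fun _ => IsRel.not) (fun _ _ => IsRel.sup)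
            IsBC.bot (fun _ => IsBC.not) (fun _ _ => IsBC.sup) l₁
            (fun q hq => ⟨hl₁A q hq, hl₁E q hq⟩))
          (fun q hq => ⟨hl₂A q hq, hl₂E q hq⟩) p hp).2
      · intro v xs hx
        rw [BoundedFormula.realize_imp, hl₁sem v xs hx, hl₂sem v xs hx,
          orCNF_val (fun χ => χ.Realize v (eA n (by omega) xs))
            (fun χ => χ.Realize v (eE n hN (le_refl n) xs))
            (fun _ _ => BoundedFormula.realize_sup) (fun _ _ => BoundedFormula.realize_sup),
          negCNF_val (fun χ => χ.Realize v (eA n (by omega) xs))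
            (fun χ => χ.Realize v (eE n hN (le_refl n) xs))
            (by simp) (fun _ => BoundedFormula.realize_not)
            (fun _ _ => BoundedFormula.realize_sup)
            (by simp) (fun _ => BoundedFormula.realize_not)
            (fun _ _ => BoundedFormula.realize_sup)]
        tauto

/-- The main induction: every formula is equivalent in the disjoint union to a Boolean
combination of sorted formulas (provided there is at least one sort). -/
theorem mainBC (i₀ : Fin k) {n : ℕ} (φ : (bigLang k Ls).BoundedFormula α n) :
    ∃ ψ : (bigLang k Ls).BoundedFormula α n, IsBC ψ ∧
      ∀ (v : α → Σ j, A j) (xs : Fin n → Σ j, A j),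
        (φ.Realize v xs ↔ ψ.Realize v xs) := by
  induction φ with
  | falsum => exact ⟨⊥, IsBC.falsum, fun v xs => Iff.rfl⟩
  | equal t₁ t₂ => exact ⟨_, IsBC.of i₀ (IsRel.equal t₁ t₂), fun v xs => Iff.rfl⟩
  | @rel nr lr R ts =>
      rcases R with ⟨i, r⟩ | ⟨⟨hr⟩, i⟩
      · exact ⟨_, IsBC.of i (IsRel.rel r ts), fun v xs => Iff.rfl⟩
      · subst hr
        exact ⟨_, IsBC.of i (IsRel.relR ts), fun v xs => Iff.rfl⟩
  | imp φ₁ φ₂ ih₁ ih₂ =>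
      obtain ⟨ψ₁, hb₁, he₁⟩ := ih₁
      obtain ⟨ψ₂, hb₂, he₂⟩ := ih₂
      exact ⟨ψ₁.imp ψ₂, hb₁.imp hb₂, fun v xs => by
        rw [BoundedFormula.realize_imp, BoundedFormula.realize_imp, he₁, he₂]⟩
  | @all nφ φ₀ ih =>
      obtain ⟨ψ, hψ, he⟩ := ih
      choose L hLA hLE hLsem using fun i : Fin k => lemmaB (A := A) i hψ nφ rfl
      refine ⟨((List.finRange k).map fun i =>
          ((L i).map fun p => (relAll i p.1) ⊔ p.2).foldr (· ⊓ ·) ⊤).foldr (· ⊓ ·) ⊤,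
        ?_, ?_⟩
      · apply isBC_listConj
        intro χ hχ
        rw [List.mem_map] at hχ
        obtain ⟨i, -, rfl⟩ := hχ
        apply isBC_listConj
        intro χ hχ
        rw [List.mem_map] at hχ
        obtain ⟨p, hp, rfl⟩ := hχ
        exact (IsBC.of i (IsRel.relAll (hLA i p hp))).sup (hLE i p hp)
      · intro v xs
        have step : ∀ z : Σ j, A j, (φ₀.Realize v (Fin.snoc xs z) ↔
            ∀ p ∈ L z.1, p.1.Realize v (Fin.snoc xs z) ∨ p.2.Realize v xs) := by
          intro z
          rw [he v (Fin.snoc xs z)]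
          have hcond : ∀ p : Fin (nφ + 1), p.1 = nφ →
              ((Fin.snoc xs z : Fin (nφ + 1) → Σ j, A j) p).1 = z.1 := by
            intro p hp
            rw [snoc_eval, dif_neg (by omega)]
          have := hLsem z.1 v (Fin.snoc xs z) hcond
          have eAid : eA nφ (by omega) (Fin.snoc xs z : Fin (nφ + 1) → Σ j, A j) =
              Fin.snoc xs z :=
            funext fun u =>
              congrArg (Fin.snoc xs z : Fin (nφ + 1) → Σ j, A j) (Fin.ext rfl)
          have eEid : eE nφ rfl (le_refl nφ)
              (Fin.snoc xs z : Fin (nφ + 1) → Σ j, A j) = xs := by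
            funext u
            show (Fin.snoc xs z : Fin (nφ + 1) → Σ j, A j) (embE nφ rfl (le_refl nφ) u) = xs u
            have hval : embE nφ rfl (le_refl nφ) u = ⟨u.1, by omega⟩ := by
              simp only [embE, dif_pos u.isLt]
            rw [hval, snoc_eval, dif_pos (show u.1 < nφ by omega)]
          rw [eAid, eEid] at this
          exact this
        rw [BoundedFormula.realize_all]
        have hR : (((List.finRange k).map fun i =>
            ((L i).map fun p => (relAll i p.1) ⊔ p.2).foldr (· ⊓ ·) ⊤).foldr
              (· ⊓ ·) ⊤).Realize v xs ↔
            ∀ i : Fin k, ∀ p ∈ L i,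
              (∀ z : Σ j, A j, z.1 = i → p.1.Realize v (Fin.snoc xs z)) ∨
                p.2.Realize v xs := by
          rw [BoundedFormula.realize_foldr_inf]
          constructor
          · intro h i p hp
            have h1 := h _ (List.mem_map_of_mem (List.mem_finRange i))
            rw [BoundedFormula.realize_foldr_inf] at h1
            have h2 := h1 _ (List.mem_map_of_mem hp)
            rw [BoundedFormula.realize_sup, realize_relAll] at h2
            exact h2
          · intro h χ hχ
            rw [List.mem_map] at hχ
            obtain ⟨i, -, rfl⟩ := hχ
            rw [BoundedFormula.realize_foldr_inf]
            intro χ hχ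
            rw [List.mem_map] at hχ
            obtain ⟨p, hp, rfl⟩ := hχ
            rw [BoundedFormula.realize_sup, realize_relAll]
            exact h i p hp
        rw [hR]
        constructor
        · intro hall i p hp
          by_cases hE : p.2.Realize v xs
          · exact Or.inr hE
          · refine Or.inl fun z hz => ?_
            have hp' : p ∈ L z.1 := by rw [hz]; exact hp
            rcases (step z).1 (hall z) p hp' with hA | hE'
            · exact hA
            · exact absurd hE' hE
        · intro h z
          refine (step z).2 fun p hp => ?_
          rcases h z.1 p hp with hA | hE
          · exact Or.inl (hA z rfl)
          · exact Or.inr hE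

end Aux

/-- Every first-order formula in the language of the disjoint union `B` of `A₁, …, A_k`
(structures in pairwise disjoint relational languages, with unary domain predicates) is
equivalent in `B` to a Boolean combination of formulas each only involving quantifiers
relativized to a single sort `R_i` and relations of the corresponding `A_i`. -/
theorem boolean_combination_of_sorted (α : Type) (φ : (bigLang k Ls).Formula α) :
    ∃ ψ : (bigLang k Ls).Formula α, IsBC ψ ∧
      ∀ v : α → Σ i, A i,
        (letI := bigStruct k Ls A; (φ.Realize v ↔ ψ.Realize v)) := by
  letI := bigStruct k Ls A
  rcases Nat.eq_zero_or_pos k with hk | hk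
  · subst hk
    have hM : IsEmpty (Σ i : Fin 0, A i) := ⟨fun x => x.1.elim0⟩
    by_cases hα : Nonempty α
    · exact ⟨⊥, IsBC.falsum, fun v => (hM.false (v (Classical.choice hα))).elim⟩
    · have hα' : IsEmpty α := not_nonempty_iff.mp hα
      have hv : ∀ v v' : α → Σ i : Fin 0, A i, v = v' :=
        fun v v' => funext fun a => (hα'.false a).elim
      by_cases hφ : φ.Realize ((fun a => (hα'.false a).elim) : α → Σ i : Fin 0, A i)
      · refine ⟨(⊥ : (bigLang 0 Ls).Formula α).not, IsBC.bot.not, fun v => ?_⟩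
        rw [hv v ((fun a => (hα'.false a).elim) : α → Σ i : Fin 0, A i)]
        simp [hφ]
      · refine ⟨⊥, IsBC.falsum, fun v => ?_⟩
        rw [hv v ((fun a => (hα'.false a).elim) : α → Σ i : Fin 0, A i)]
        simp [hφ]
  · obtain ⟨ψ, hb, hsem⟩ := mainBC (A := A) ⟨0, hk⟩ φ
    exact ⟨ψ, hb, fun v => hsem v default⟩

end Stmt5
end

section
/- Let G₀ ⊆ G₁ ⊆ … be defined as follows from a computable triple predicate: at each stage s, either G_s = G_t for the greatest t < s such that every element of G_t is still 'confirmed' at stage s, or G_s = G_{s-1} ∪ {one new confirmed element}. Define s ≤₁ t iff s ≤ t and G_s ⊆ G_t. Then ≤₁ satisfies: if s < t < u and s ≤₁ u, then s ≤₁ t. -/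
namespace StmtTS

/-- `x` appears to be labeled `ℓ` at stage `s` with witness `n`: `C x ℓ n m` has held for all
`m < s`, and `n` is the least such witness. -/
def Appears (C : ℕ → ℕ → ℕ → ℕ → Prop) (x ℓ n s : ℕ) : Prop :=
  (∀ m < s, C x ℓ n m) ∧ ∀ n' < n, ∃ m < s, ¬C x ℓ n' m

/-- `TrueStageSetup C rk G` axiomatizes the true-stage construction of the stagewise guess
sets `G s` of triples `(x, ℓ, n)` from the computable confirmation predicate `C`, relative to
a fixed effective enumeration of triples with rank function `rk` (triples with the same
`(x, ℓ)` appearing in increasing order of `n`):  `G 0 = ∅`, and at each stage `s + 1` we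
either roll back to `G t` for the greatest `t ≤ s` all of whose triples are still confirmed,
or (if no mistake appeared) add the least newly appearing triple, if any. -/
structure TrueStageSetup (C : ℕ → ℕ → ℕ → ℕ → Prop) (rk : ℕ × ℕ × ℕ → ℕ)
    (G : ℕ → Set (ℕ × ℕ × ℕ)) : Prop where
  comp : ComputablePred fun q : (ℕ × ℕ × ℕ) × ℕ => C q.1.1 q.1.2.1 q.1.2.2 q.2
  rk_comp : Computable rk
  rk_inj : Function.Injective rk
  rk_mono : ∀ x ℓ n n', n < n' → rk (x, ℓ, n) < rk (x, ℓ, n')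
  init : G 0 = ∅
  step : ∀ s : ℕ,
    ((∃ q ∈ G s, ¬Appears C q.1 q.2.1 q.2.2 (s + 1)) ∧
      ∃ t ≤ s, (∀ q ∈ G t, Appears C q.1 q.2.1 q.2.2 (s + 1)) ∧
        (∀ t' ≤ s, (∀ q ∈ G t', Appears C q.1 q.2.1 q.2.2 (s + 1)) → t' ≤ t) ∧
        G (s + 1) = G t) ∨
    ((∀ q ∈ G s, Appears C q.1 q.2.1 q.2.2 (s + 1)) ∧
      ((G (s + 1) = G s ∧ ∀ q ∉ G s, ¬Appears C q.1 q.2.1 q.2.2 (s + 1)) ∨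
        (∃ q ∉ G s, Appears C q.1 q.2.1 q.2.2 (s + 1) ∧ G (s + 1) = insert q (G s) ∧
          ∀ q' ∉ G s, Appears C q'.1 q'.2.1 q'.2.2 (s + 1) → rk q ≤ rk q')))
  finite : ∀ s, (G s).Finite

/-- `s ≤₁ t`: `s ≤ t` and `G s ⊆ G t`. -/
def Le1 (G : ℕ → Set (ℕ × ℕ × ℕ)) (s t : ℕ) : Prop := s ≤ t ∧ G s ⊆ G t

/-- A stage `s` is a true stage if `s ≤₁ t` for all `t > s` (equivalently, all `t ≥ s`). -/
def TrueStage (G : ℕ → Set (ℕ × ℕ × ℕ)) (s : ℕ) : Prop := ∀ t, s ≤ t → G s ⊆ G t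

end StmtTS

open StmtTS in
lemma appears_convex (C : ℕ → ℕ → ℕ → ℕ → Prop) {x ℓ n a b r : ℕ}
    (ha : Appears C x ℓ n a) (hb : Appears C x ℓ n b) (har : a ≤ r) (hrb : r ≤ b) :
    Appears C x ℓ n r := by
  refine ⟨fun m hm => hb.1 m (lt_of_lt_of_le hm hrb), fun n' hn' => ?_⟩
  obtain ⟨m, hm, hc⟩ := ha.2 n' hn'
  exact ⟨m, lt_of_lt_of_le hm har, hc⟩

open StmtTS in
lemma mem_appears (C : ℕ → ℕ → ℕ → ℕ → Prop) (rk : ℕ × ℕ × ℕ → ℕ)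
    (G : ℕ → Set (ℕ × ℕ × ℕ)) (H : TrueStageSetup C rk G) :
    ∀ s, ∀ q ∈ G s, Appears C q.1 q.2.1 q.2.2 s := by
  intro s
  induction s with
  | zero => intro q hq; rw [H.init] at hq; exact absurd hq (Set.notMem_empty q)
  | succ s ih =>
    rcases H.step s with ⟨_, t, _, hall, _, hG⟩ | ⟨hall, hcase⟩
    · intro q hq; rw [hG] at hq; exact hall q hq
    · rcases hcase with ⟨hG, _⟩ | ⟨q0, _, hq0, hG, _⟩
      · intro q hq; rw [hG] at hq; exact hall q hq
      · intro q hq; rw [hG] at hq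
        rcases hq with rfl | hq
        · exact hq0
        · exact hall q hq

open StmtTS in
/-- In the true-stage construction: if `s < t < u` and `s ≤₁ u`, then `s ≤₁ t`. -/
theorem le1_of_le1_of_between (C : ℕ → ℕ → ℕ → ℕ → Prop) (rk : ℕ × ℕ × ℕ → ℕ)
    (G : ℕ → Set (ℕ × ℕ × ℕ)) (H : TrueStageSetup C rk G)
    (s t u : ℕ) (hst : s < t) (htu : t < u) (hsu : Le1 G s u) : Le1 G s t := by
  refine ⟨le_of_lt hst, ?_⟩
  have key : ∀ r, s ≤ r → r ≤ u → G s ⊆ G r := by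
    intro r
    induction r using Nat.strong_induction_on with
    | _ r ih =>
      intro hsr hru
      rcases Nat.eq_or_lt_of_le hsr with rfl | hlt
      · exact subset_rfl
      · obtain ⟨r', rfl⟩ : ∃ r', r = r' + 1 :=
          ⟨r - 1, by omega⟩
        have hsr' : s ≤ r' := Nat.lt_succ_iff.mp hlt
        have hr'u : r' ≤ u := le_trans (Nat.le_succ r') hru
        rcases H.step r' with ⟨_, t0, ht0, hall, hmax, hG⟩ | ⟨_, hcase⟩
        · -- rollback: every q ∈ G s appears at r'+1, so s ≤ t0
          have hsapp : ∀ q ∈ G s, Appears C q.1 q.2.1 q.2.2 (r' + 1) := by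
            intro q hq
            exact appears_convex C (mem_appears C rk G H s q hq)
              (mem_appears C rk G H u q (hsu.2 hq)) (le_of_lt hlt) hru
          have hst0 : s ≤ t0 := hmax s hsr' hsapp
          rw [hG]
          exact ih t0 (Nat.lt_succ_of_le ht0) hst0 (le_trans ht0 hr'u)
        · have hsub : G s ⊆ G r' := ih r' (Nat.lt_succ_self r') hsr' hr'u
          rcases hcase with ⟨hG, _⟩ | ⟨q0, _, _, hG, _⟩
          · rw [hG]; exact hsub
          · rw [hG]; exact subset_trans hsub (Set.subset_insert q0 (G r'))
  exact key t (le_of_lt hst) (le_of_lt htu)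
end

section
/- With G_s and ≤₁ as in the true-stage construction, call s a true stage if s ≤₁ t for all t > s. Then there are infinitely many true stages. -/
open StmtTS

section Aux

variable {C : ℕ → ℕ → ℕ → ℕ → Prop} {rk : ℕ × ℕ × ℕ → ℕ} {G : ℕ → Set (ℕ × ℕ × ℕ)}

/-- All members of `G t` appear at stage `u`. -/
def ConfTS (C : ℕ → ℕ → ℕ → ℕ → Prop) (G : ℕ → Set (ℕ × ℕ × ℕ)) (t u : ℕ) : Prop :=
  ∀ q ∈ G t, Appears C q.1 q.2.1 q.2.2 u

lemma confTS_self (H : TrueStageSetup C rk G) (s : ℕ) : ConfTS C G s s := by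
  cases s with
  | zero => intro q hq; rw [H.init] at hq; exact absurd hq (Set.notMem_empty q)
  | succ n =>
    rcases H.step n with ⟨_, t, _, hc, _, hG⟩ | ⟨hc, ⟨hG, _⟩ | ⟨q0, _, ha, hG, _⟩⟩
    · intro q hq; rw [hG] at hq; exact hc q hq
    · intro q hq; rw [hG] at hq; exact hc q hq
    · intro q hq; rw [hG] at hq
      rcases hq with rfl | hq
      · exact ha
      · exact hc q hq

lemma confTS_restrict (H : TrueStageSetup C rk G) {t v u : ℕ} (h : ConfTS C G t u)
    (htv : t ≤ v) (hvu : v ≤ u) : ConfTS C G t v := by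
  intro q hq
  refine ⟨fun m hm => (h q hq).1 m (lt_of_lt_of_le hm hvu), fun n' hn' => ?_⟩
  obtain ⟨m, hm, hcm⟩ := (confTS_self H t q hq).2 n' hn'
  exact ⟨m, lt_of_lt_of_le hm htv, hcm⟩

lemma confTS_sub (H : TrueStageSetup C rk G) :
    ∀ s t, t ≤ s → ConfTS C G t s → G t ⊆ G s := by
  intro s
  induction s using Nat.strong_induction_on with
  | _ s ih =>
    intro t hts hconf
    rcases Nat.eq_or_lt_of_le hts with rfl | hlt
    · exact subset_rfl
    · obtain ⟨n, rfl⟩ : ∃ n, s = n + 1 := ⟨s - 1, by omega⟩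
      have htn : t ≤ n := by omega
      rcases H.step n with ⟨_, t₀, ht₀, hc₀, hmax, hG⟩ | ⟨_, hcase⟩
      · have htt₀ : t ≤ t₀ := hmax t htn hconf
        rw [hG]
        exact ih t₀ (by omega) t htt₀ (confTS_restrict H hconf htt₀ (by omega))
      · have hsub : G t ⊆ G n := ih n (by omega) t htn (confTS_restrict H hconf htn (by omega))
        rcases hcase with ⟨hG, _⟩ | ⟨q0, _, _, hG, _⟩ <;> rw [hG]
        · exact hsub
        · exact hsub.trans (Set.subset_insert _ _)

lemma confTS_sub_succ (H : TrueStageSetup C rk G) {t u : ℕ} (htu : t ≤ u)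
    (hconf : ConfTS C G t (u + 1)) : G t ⊆ G (u + 1) := by
  rcases H.step u with ⟨_, t₀, ht₀, hc₀, hmax, hG⟩ | ⟨_, hcase⟩
  · have htt₀ : t ≤ t₀ := hmax t htu hconf
    rw [hG]
    exact confTS_sub H t₀ t htt₀ (confTS_restrict H hconf htt₀ (by omega))
  · have hsub : G t ⊆ G u := confTS_sub H u t htu (confTS_restrict H hconf htu (Nat.le_succ u))
    rcases hcase with ⟨hG, _⟩ | ⟨q0, _, _, hG, _⟩ <;> rw [hG]
    · exact hsub
    · exact hsub.trans (Set.subset_insert _ _)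

lemma alive_of_true (H : TrueStageSetup C rk G) {t : ℕ} (ht : TrueStage G t)
    {q : ℕ × ℕ × ℕ} (hq : q ∈ G t) (m : ℕ) : C q.1 q.2.1 q.2.2 m := by
  have hq' : q ∈ G (max t (m + 1)) := ht _ (le_max_left _ _) hq
  exact (confTS_self H _ q hq').1 m (lt_of_lt_of_le (Nat.lt_succ_self m) (le_max_right _ _))

lemma confTS_of_true (H : TrueStageSetup C rk G) {t u : ℕ} (ht : TrueStage G t)
    (htu : t ≤ u) : ConfTS C G t u := by
  intro q hq
  refine ⟨fun m _ => alive_of_true H ht hq m, fun n' hn' => ?_⟩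
  obtain ⟨m, hm, hcm⟩ := (confTS_self H t q hq).2 n' hn'
  exact ⟨m, lt_of_lt_of_le hm htu, hcm⟩

lemma true_of_conf (H : TrueStageSetup C rk G) {t : ℕ}
    (h : ∀ u, t ≤ u → ConfTS C G t u) : TrueStage G t := by
  intro u htu
  rcases Nat.eq_or_lt_of_le htu with rfl | hlt
  · exact subset_rfl
  · obtain ⟨v, rfl⟩ : ∃ v, u = v + 1 := ⟨u - 1, by omega⟩
    exact confTS_sub_succ H (by omega) (h (v + 1) (by omega))

end Aux

open StmtTS in
/-- In the true-stage construction there are infinitely many true stages. -/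
theorem infinitely_many_true_stages (C : ℕ → ℕ → ℕ → ℕ → Prop) (rk : ℕ × ℕ × ℕ → ℕ)
    (G : ℕ → Set (ℕ × ℕ × ℕ)) (H : TrueStageSetup C rk G) :
    ∀ s : ℕ, ∃ t, s < t ∧ TrueStage G t := by
  classical
  intro s
  by_contra hcon
  push_neg at hcon
  have h0 : TrueStage G 0 := fun u _ => by rw [H.init]; exact Set.empty_subset _
  set t := Nat.findGreatest (TrueStage G) s with ht_def
  have htT : TrueStage G t := Nat.findGreatest_spec (Nat.zero_le s) h0
  have hmaxtrue : ∀ v, TrueStage G v → v ≤ t := by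
    intro v hv
    by_contra h
    push_neg at h
    rcases le_or_gt v s with hvs | hvs
    · exact Nat.findGreatest_is_greatest h hvs hv
    · exact hcon v hvs hv
  rcases H.step t with ⟨⟨q, hq, hnq⟩, _⟩ | ⟨hcall, hcase⟩
  · exact hnq (confTS_of_true H htT (Nat.le_succ t) q hq)
  rcases hcase with ⟨hG, _⟩ | ⟨q₁, hq₁n, hq₁app, hG, _⟩
  · have htrue : TrueStage G (t + 1) := fun u hu => by
      rw [hG]; exact htT u (by omega)
    have := hmaxtrue _ htrue; omega
  · by_cases halive : ∀ m, C q₁.1 q₁.2.1 q₁.2.2 m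
    · have hconf : ∀ u, t + 1 ≤ u → ConfTS C G (t + 1) u := by
        intro u hu q hq
        rw [hG] at hq
        rcases hq with rfl | hq
        · refine ⟨fun m _ => halive m, fun n' hn' => ?_⟩
          obtain ⟨m, hm, hcm⟩ := hq₁app.2 n' hn'
          exact ⟨m, by omega, hcm⟩
        · exact confTS_of_true H htT (by omega) q hq
      have := hmaxtrue _ (true_of_conf H hconf); omega
    · push_neg at halive
      set d := Nat.find halive with hd_def
      have hdC : ¬ C q₁.1 q₁.2.1 q₁.2.2 d := Nat.find_spec halive
      have hdleast : ∀ m, m < d → C q₁.1 q₁.2.1 q₁.2.2 m := fun m hm =>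
        not_not.mp (Nat.find_min halive hm)
      have hdt : t + 1 ≤ d := by
        by_contra h
        exact hdC (hq₁app.1 d (by omega))
      have hmem : ∀ v, t + 1 ≤ v → v ≤ d → G (t + 1) ⊆ G v := by
        intro v hv1 hvd
        rcases Nat.eq_or_lt_of_le hv1 with rfl | hlt
        · exact subset_rfl
        · obtain ⟨u, rfl⟩ : ∃ u, v = u + 1 := ⟨v - 1, by omega⟩
          refine confTS_sub_succ H (by omega) ?_
          intro q hq
          rw [hG] at hq
          rcases hq with rfl | hq
          · refine ⟨fun m hm => hdleast m (by omega), fun n' hn' => ?_⟩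
            obtain ⟨m, hm, hcm⟩ := hq₁app.2 n' hn'
            exact ⟨m, by omega, hcm⟩
          · exact confTS_of_true H htT (by omega) q hq
      have hq₁mem : q₁ ∈ G (t + 1) := by rw [hG]; exact Set.mem_insert _ _
      have hq₁d : q₁ ∈ G d := hmem d hdt le_rfl hq₁mem
      have hnap : ¬ Appears C q₁.1 q₁.2.1 q₁.2.2 (d + 1) := fun h => hdC (h.1 d (by omega))
      rcases H.step d with ⟨_, t₀, ht₀, hc₀, hmax₀, hGd⟩ | ⟨hcall', _⟩
      · have ht₀t : t₀ ≤ t := by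
          by_contra h
          push_neg at h
          exact hnap (hc₀ q₁ (hmem t₀ (by omega) ht₀ hq₁mem))
        have h1 : G t₀ ⊆ G t :=
          confTS_sub H t t₀ ht₀t (confTS_restrict H hc₀ ht₀t (by omega))
        have h2 : G t ⊆ G t₀ := by
          have := htT (d + 1) (by omega)
          rwa [hGd] at this
        have hGdt : G (d + 1) = G t := by rw [hGd]; exact Set.Subset.antisymm h1 h2
        have htrue : TrueStage G (d + 1) := fun u hu => by
          rw [hGdt]; exact htT u (by omega)
        have := hmaxtrue _ htrue; omega
      · exact hnap (hcall' q₁ hq₁d)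
end

section
/- In the true-stage construction, let X^s_ℓ = {x : ∃n (x,ℓ,n) ∈ G_s}, and let X_ℓ = {x : ∃n ∀m C(x,n,m)} be the Σ⁰₂ set being approximated. Letting s₀ < s₁ < s₂ < ⋯ enumerate the true stages, X_ℓ = ⋃_i X^{s_i}_ℓ. -/
namespace TSAux

open StmtTS

variable {C : ℕ → ℕ → ℕ → ℕ → Prop} {rk : ℕ × ℕ × ℕ → ℕ} {G : ℕ → Set (ℕ × ℕ × ℕ)}

/-- A "true triple": its witness is confirmed forever and is the least such. -/
def TrueT (C : ℕ → ℕ → ℕ → ℕ → Prop) (q : ℕ × ℕ × ℕ) : Prop :=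
  (∀ m, C q.1 q.2.1 q.2.2 m) ∧ ∀ n' < q.2.2, ∃ m, ¬C q.1 q.2.1 n' m

lemma app_succ (H : TrueStageSetup C rk G) (s : ℕ) :
    ∀ q ∈ G (s + 1), Appears C q.1 q.2.1 q.2.2 (s + 1) := by
  rcases H.step s with ⟨_, t, _, hconf, _, heq⟩ | ⟨hconf, hrest⟩
  · intro q hq
    rw [heq] at hq
    exact hconf q hq
  · rcases hrest with ⟨heq, _⟩ | ⟨q', hq'n, happ, heq, _⟩
    · intro q hq
      rw [heq] at hq
      exact hconf q hq
    · intro q hq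
      rw [heq] at hq
      rcases Set.mem_insert_iff.mp hq with rfl | hq
      · exact happ
      · exact hconf q hq

lemma trueT_app_mono {q : ℕ × ℕ × ℕ} {s t : ℕ} (hT : TrueT C q)
    (h : Appears C q.1 q.2.1 q.2.2 s) (hst : s ≤ t) : Appears C q.1 q.2.1 q.2.2 t := by
  refine ⟨fun m _ => hT.1 m, fun n' hn' => ?_⟩
  obtain ⟨m, hm, hc⟩ := h.2 n' hn'
  exact ⟨m, by omega, hc⟩

lemma trueStage_mem_trueT (H : TrueStageSetup C rk G) {s : ℕ} {q : ℕ × ℕ × ℕ}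
    (hs : TrueStage G s) (hq : q ∈ G s) : TrueT C q := by
  constructor
  · intro m
    have hv : q ∈ G (max s m + 1) := hs _ (le_trans (le_max_left s m) (Nat.le_succ _)) hq
    exact (app_succ H _ q hv).1 m (by omega)
  · intro n' hn'
    have hv : q ∈ G (s + 1) := hs _ (Nat.le_succ s) hq
    obtain ⟨m, _, hm⟩ := (app_succ H s q hv).2 n' hn'
    exact ⟨m, hm⟩

lemma trueStage_of_allTrue (H : TrueStageSetup C rk G) (s : ℕ)
    (hall : ∀ q ∈ G s, TrueT C q) : TrueStage G s := by
  have key : ∀ q ∈ G s, ∀ v, s ≤ v → Appears C q.1 q.2.1 q.2.2 v := by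
    intro q hq
    have happ : Appears C q.1 q.2.1 q.2.2 s := by
      rcases s with _ | s'
      · rw [H.init] at hq
        exact absurd hq (Set.notMem_empty q)
      · exact app_succ H s' q hq
    intro v hv
    exact trueT_app_mono (hall q hq) happ hv
  intro t
  induction t using Nat.strong_induction_on with
  | _ t ih =>
    intro ht
    rcases eq_or_lt_of_le ht with rfl | hlt
    · exact subset_rfl
    · obtain ⟨w, rfl⟩ : ∃ w, t = w + 1 := ⟨t - 1, by omega⟩
      have hsw : s ≤ w := by omega
      rcases H.step w with ⟨_, t', ht'w, hconf', hmax', heq'⟩ | ⟨_, hrest⟩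
      · have hst' : s ≤ t' := hmax' s hsw (fun q hq => key q hq (w + 1) (by omega))
        rw [heq']
        exact ih t' (by omega) hst'
      · have hsub : G s ⊆ G w := ih w (by omega) hsw
        rcases hrest with ⟨heq', _⟩ | ⟨q', _, _, heq', _⟩
        · rw [heq']
          exact hsub
        · rw [heq']
          exact hsub.trans (Set.subset_insert q' (G w))

lemma not_trueT_not_appears {q : ℕ × ℕ × ℕ} (hq : ¬TrueT C q) :
    ∃ N, ∀ v, N ≤ v → ¬Appears C q.1 q.2.1 q.2.2 v := by
  rw [TrueT, not_and_or] at hq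
  rcases hq with h | h
  · push_neg at h
    obtain ⟨m₀, hm₀⟩ := h
    exact ⟨m₀ + 1, fun v hv happ => hm₀ (happ.1 m₀ (by omega))⟩
  · push_neg at h
    obtain ⟨n', hn', hall⟩ := h
    refine ⟨0, fun v _ happ => ?_⟩
    obtain ⟨m, _, hm⟩ := happ.2 n' hn'
    exact hm (hall m)

lemma not_trueT_not_mem (H : TrueStageSetup C rk G) {q : ℕ × ℕ × ℕ} (hq : ¬TrueT C q) :
    ∃ N, ∀ v, N ≤ v → q ∉ G v := by
  obtain ⟨N, hN⟩ := not_trueT_not_appears hq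
  refine ⟨N + 1, fun v hv hmem => ?_⟩
  obtain ⟨w, rfl⟩ : ∃ w, v = w + 1 := ⟨v - 1, by omega⟩
  exact hN (w + 1) (by omega) (app_succ H w q hmem)

lemma trueT_appears_large {q : ℕ × ℕ × ℕ} (hq : TrueT C q) :
    ∃ N, ∀ v, N ≤ v → Appears C q.1 q.2.1 q.2.2 v := by
  have hbd : ∀ k, k ≤ q.2.2 → ∃ N, ∀ n' < k, ∃ m < N, ¬C q.1 q.2.1 n' m := by
    intro k
    induction k with
    | zero => exact fun _ => ⟨0, fun n' h => absurd h (by omega)⟩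
    | succ k ih =>
      intro hk
      obtain ⟨N, hN⟩ := ih (by omega)
      obtain ⟨m₀, hm₀⟩ := hq.2 k (by omega)
      refine ⟨max N (m₀ + 1), fun n' hn' => ?_⟩
      rcases Nat.lt_or_ge n' k with h | h
      · obtain ⟨m, hm, hc⟩ := hN n' h
        exact ⟨m, by omega, hc⟩
      · have hnk : n' = k := by omega
        subst hnk
        exact ⟨m₀, by omega, hm₀⟩
  obtain ⟨N, hN⟩ := hbd q.2.2 le_rfl
  refine ⟨N, fun v hv => ⟨fun m _ => hq.1 m, fun n' hn' => ?_⟩⟩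
  obtain ⟨m, hm, hc⟩ := hN n' hn'
  exact ⟨m, by omega, hc⟩

lemma trueStage_zero (H : TrueStageSetup C rk G) : TrueStage G 0 := by
  intro t _
  rw [H.init]
  exact Set.empty_subset _

lemma exists_trueStage_gt (H : TrueStageSetup C rk G) {s : ℕ} (hs : TrueStage G s) :
    ∃ t, s < t ∧ TrueStage G t := by
  classical
  rcases H.step s with ⟨⟨q, hq, hnapp⟩, _⟩ | ⟨hconf, hrest⟩
  · exact absurd (app_succ H s q (hs (s + 1) (Nat.le_succ s) hq)) hnapp
  rcases hrest with ⟨heq, _⟩ | ⟨q₁, hq₁n, happ₁, heq, _⟩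
  · refine ⟨s + 1, Nat.lt_succ_self s, fun t ht => ?_⟩
    rw [heq]
    exact hs t (by omega)
  by_cases hT : TrueT C q₁
  · refine ⟨s + 1, Nat.lt_succ_self s, trueStage_of_allTrue H (s + 1) ?_⟩
    intro q' hq'
    rw [heq] at hq'
    rcases Set.mem_insert_iff.mp hq' with rfl | hq'
    · exact hT
    · exact trueStage_mem_trueT H hs hq'
  · obtain ⟨N, hN⟩ := not_trueT_not_mem H hT
    have hex : ∃ v, s + 1 ≤ v ∧ q₁ ∉ G v :=
      ⟨max N (s + 1), le_max_right _ _, hN _ (le_max_left _ _)⟩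
    obtain ⟨u, ⟨hu1, hu2⟩, humin⟩ :
        ∃ u, (s + 1 ≤ u ∧ q₁ ∉ G u) ∧ ∀ v < u, ¬(s + 1 ≤ v ∧ q₁ ∉ G v) :=
      ⟨Nat.find hex, Nat.find_spec hex, fun v hv => Nat.find_min hex hv⟩
    have hmem1 : q₁ ∈ G (s + 1) := by
      rw [heq]
      exact Set.mem_insert _ _
    have hu3 : ∀ v, s + 1 ≤ v → v < u → q₁ ∈ G v := by
      intro v hv1 hv2
      by_contra hc
      exact humin v hv2 ⟨hv1, hc⟩
    have hune : s + 1 < u := by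
      rcases eq_or_lt_of_le hu1 with h | h
      · rw [← h] at hu2
        exact absurd hmem1 hu2
      · exact h
    obtain ⟨w, rfl⟩ : ∃ w, u = w + 1 := ⟨u - 1, by omega⟩
    have hq₁w : q₁ ∈ G w := hu3 w (by omega) (by omega)
    rcases H.step w with ⟨_, t', ht'w, hconf', hmax', heq'⟩ | ⟨_, hrest'⟩
    · have hst' : s ≤ t' :=
        hmax' s (by omega) (fun q' hq' => app_succ H w q' (hs (w + 1) (by omega) hq'))
      have ht's : t' = s := by
        by_contra hne
        have h1 : s + 1 ≤ t' := by omega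
        have hmem' : q₁ ∈ G t' := hu3 t' h1 (by omega)
        rw [← heq'] at hmem'
        exact hu2 hmem'
      refine ⟨w + 1, by omega, fun t ht => ?_⟩
      rw [heq', ht's]
      exact hs t (by omega)
    · exfalso
      rcases hrest' with ⟨heq', _⟩ | ⟨q₂, _, _, heq', _⟩
      · rw [heq'] at hu2
        exact hu2 hq₁w
      · apply hu2
        rw [heq']
        exact Set.mem_insert_of_mem _ hq₁w

lemma exists_trueStage_ge (H : TrueStageSetup C rk G) :
    ∀ N, ∃ t, N ≤ t ∧ TrueStage G t := by
  intro N
  induction N with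
  | zero => exact ⟨0, le_rfl, trueStage_zero H⟩
  | succ N ih =>
    obtain ⟨t, ht, hts⟩ := ih
    obtain ⟨t', ht', hts'⟩ := exists_trueStage_gt H hts
    exact ⟨t', by omega, hts'⟩

lemma trueT_mem (H : TrueStageSetup C rk G) :
    ∀ q, TrueT C q → ∃ s, TrueStage G s ∧ q ∈ G s := by
  classical
  have main : ∀ r q, rk q = r → TrueT C q → ∃ s, TrueStage G s ∧ q ∈ G s := by
    intro r
    induction r using Nat.strong_induction_on with
    | _ r ih =>
      intro q hrk hq
      -- the finitely many smaller-rank true triples all sit inside `G s₁` for a true stage `s₁`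
      have hTfin : {q' : ℕ × ℕ × ℕ | TrueT C q' ∧ rk q' < r}.Finite := by
        have : {q' : ℕ × ℕ × ℕ | TrueT C q' ∧ rk q' < r} ⊆ rk ⁻¹' (Set.Iio r) :=
          fun q' hq' => hq'.2
        exact Set.Finite.subset (Set.Finite.preimage (H.rk_inj.injOn) (Set.finite_Iio r)) this
      have hs₁ : ∃ s₁, TrueStage G s₁ ∧ {q' | TrueT C q' ∧ rk q' < r} ⊆ G s₁ := by
        refine Set.Finite.induction_on_subset
          (motive := fun A _ => ∃ s₁, TrueStage G s₁ ∧ A ⊆ G s₁) _ hTfin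
          ⟨0, trueStage_zero H, Set.empty_subset _⟩ ?_
        intro a A ha _ _ ihA
        obtain ⟨s₁, hs₁, hsub⟩ := ihA
        obtain ⟨sa, hsa, hqa⟩ := ih (rk a) ha.2 a rfl ha.1
        rcases le_total s₁ sa with hle | hle
        · exact ⟨sa, hsa, Set.insert_subset_iff.mpr ⟨hqa, hsub.trans (hs₁ sa hle)⟩⟩
        · exact ⟨s₁, hs₁, Set.insert_subset_iff.mpr ⟨hsa s₁ hle hqa, hsub⟩⟩
      obtain ⟨s₁, hs₁t, hs₁sub⟩ := hs₁
      -- a uniform bound past which no false triple of rank ≤ r appears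
      have hFfin : {q' : ℕ × ℕ × ℕ | rk q' ≤ r ∧ ¬TrueT C q'}.Finite := by
        have : {q' : ℕ × ℕ × ℕ | rk q' ≤ r ∧ ¬TrueT C q'} ⊆ rk ⁻¹' (Set.Iic r) :=
          fun q' hq' => hq'.1
        exact Set.Finite.subset (Set.Finite.preimage (H.rk_inj.injOn) (Set.finite_Iic r)) this
      have hNF : ∃ NF, ∀ q' ∈ {q' : ℕ × ℕ × ℕ | rk q' ≤ r ∧ ¬TrueT C q'},
          ∀ v, NF ≤ v → ¬Appears C q'.1 q'.2.1 q'.2.2 v := by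
        refine Set.Finite.induction_on_subset
          (motive := fun A _ => ∃ NF, ∀ q' ∈ A, ∀ v, NF ≤ v → ¬Appears C q'.1 q'.2.1 q'.2.2 v) _ hFfin
          ⟨0, fun q' h => absurd h (Set.notMem_empty q')⟩ ?_
        intro a A ha _ _ ihA
        obtain ⟨NF, hNF⟩ := ihA
        obtain ⟨Na, hNa⟩ := not_trueT_not_appears ha.2
        refine ⟨max NF Na, fun q' hq' v hv => ?_⟩
        rcases Set.mem_insert_iff.mp hq' with rfl | hq'
        · exact hNa v (by omega)
        · exact hNF q' hq' v (by omega)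
      obtain ⟨NF, hNF⟩ := hNF
      obtain ⟨Mq, hMq⟩ := trueT_appears_large hq
      obtain ⟨s, hsN, hs⟩ := exists_trueStage_ge H (max (max s₁ NF) Mq)
      have hTsub : ∀ q', TrueT C q' → rk q' < r → q' ∈ G s :=
        fun q' h1 h2 => hs₁t s (by omega) (hs₁sub ⟨h1, h2⟩)
      by_cases hqs : q ∈ G s
      · exact ⟨s, hs, hqs⟩
      rcases H.step s with ⟨⟨q', hq', hnapp⟩, _⟩ | ⟨hconf, hrest⟩
      · exact absurd (app_succ H s q' (hs (s + 1) (Nat.le_succ s) hq')) hnapp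
      rcases hrest with ⟨_, hnone⟩ | ⟨q'', hq''n, happ'', heq, hmin⟩
      · exact absurd (hMq (s + 1) (by omega)) (hnone q hqs)
      · have hrkq'' : rk q'' ≤ r := by
          have := hmin q hqs (hMq (s + 1) (by omega))
          omega
        have hTq'' : TrueT C q'' := by
          by_contra hc
          exact hNF q'' ⟨hrkq'', hc⟩ (s + 1) (by omega) happ''
        obtain rfl : q'' = q := by
          rcases Nat.lt_or_ge (rk q'') r with h | h
          · exact absurd (hTsub q'' hTq'' h) hq''n
          · exact H.rk_inj (by omega)
        refine ⟨s + 1, trueStage_of_allTrue H (s + 1) ?_, by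
          rw [heq]; exact Set.mem_insert _ _⟩
        intro q' hq'
        rw [heq] at hq'
        rcases Set.mem_insert_iff.mp hq' with rfl | hq'
        · exact hTq''
        · exact trueStage_mem_trueT H hs hq'
  exact fun q hq => main (rk q) q rfl hq

end TSAux

open StmtTS in
/-- In the true-stage construction, with `X^s_ℓ = {x : ∃ n, (x,ℓ,n) ∈ G s}` and
`X_ℓ = {x : ∃ n ∀ m, C x ℓ n m}` the Σ⁰₂ set being approximated, `X_ℓ` is the union of the
sets `X^s_ℓ` over the true stages `s`. -/
theorem sigma2_set_eq_union_over_true_stages (C : ℕ → ℕ → ℕ → ℕ → Prop)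
    (rk : ℕ × ℕ × ℕ → ℕ) (G : ℕ → Set (ℕ × ℕ × ℕ)) (H : TrueStageSetup C rk G) (ℓ : ℕ) :
    {x : ℕ | ∃ n, ∀ m, C x ℓ n m} =
      ⋃ s ∈ {s : ℕ | TrueStage G s}, {x : ℕ | ∃ n, (x, ℓ, n) ∈ G s} := by
  classical
  ext x
  simp only [Set.mem_setOf_eq, Set.mem_iUnion, exists_prop]
  constructor
  · rintro ⟨n, hn⟩
    have hex : ∃ n, ∀ m, C x ℓ n m := ⟨n, hn⟩
    have hq : TSAux.TrueT C (x, ℓ, Nat.find hex) := by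
      refine ⟨Nat.find_spec hex, ?_⟩
      intro n' hn'
      have h := Nat.find_min hex hn'
      push_neg at h
      exact h
    obtain ⟨s, hs, hmem⟩ := TSAux.trueT_mem H (x, ℓ, Nat.find hex) hq
    exact ⟨s, hs, Nat.find hex, hmem⟩
  · rintro ⟨s, hs, n, hmem⟩
    exact ⟨n, (TSAux.trueStage_mem_trueT H hs hmem).1⟩
end
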